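/- arXiv:2103.07312 — 3 statements merged into one kernel-verified Lean document; each statement's English description precedes it below -/
import Mathlib

section
/- Let N be a normal subgroup of a finite group G and let ϑ be an irreducible complex character of N. If the induced character ϑ^G is irreducible, then the centralizer C_G(N) is contained in N. -/
open Module CategoryTheory MonoidalCategory

open scoped BigOperators Classical

namespace CTC

noncomputable def cfInner (G : Type) [Group G] [Fintype G] (φ ψ : G → ℂ) : ℂ :=
  (Fintype.card G : ℂ)⁻¹ * ∑ g : G, φ g * star (ψ g)

def IsChar (G : Type) [Group G] [Fintype G] (χ : G → ℂ) : Prop :=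
  ∃ (n : ℕ) (ρ : Representation ℂ G (Fin n → ℂ)),
    ∀ g : G, χ g = LinearMap.trace ℂ (Fin n → ℂ) (ρ g)

def IsIrrChar (G : Type) [Group G] [Fintype G] (χ : G → ℂ) : Prop :=
  IsChar G χ ∧ cfInner G χ χ = 1

noncomputable def Ind {G : Type} [Group G] [Fintype G] (H : Subgroup G) (φ : ↥H → ℂ) :
    G → ℂ := fun g =>
  (Fintype.card ↥H : ℂ)⁻¹ *
    ∑ x : G, if h : x * g * x⁻¹ ∈ H then φ ⟨x * g * x⁻¹, h⟩ else 0

/- ## auxiliary material -/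

noncomputable def conjRep {H : Type} [Group H] {n : ℕ} (ρ : Representation ℂ H (Fin n → ℂ)) :
    Representation ℂ H (Fin n → ℂ) where
  toFun g := Matrix.toLin' ((LinearMap.toMatrix' (ρ g)).map (starRingEnd ℂ))
  map_one' := by
    simp only [map_one]
    rw [show (1 : (Fin n → ℂ) →ₗ[ℂ] (Fin n → ℂ)) = LinearMap.id from rfl]
    simp
  map_mul' g h := by
    simp only [map_mul]
    rw [show ρ g * ρ h = (ρ g).comp (ρ h) from rfl, LinearMap.toMatrix'_comp,
      Matrix.map_mul, Matrix.toLin'_mul]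
    rfl

theorem conjRep_trace {H : Type} [Group H] {n : ℕ} (ρ : Representation ℂ H (Fin n → ℂ)) (g : H) :
    LinearMap.trace ℂ _ (conjRep ρ g) = star (LinearMap.trace ℂ _ (ρ g)) := by
  simp only [conjRep, MonoidHom.coe_mk, OneHom.coe_mk]
  rw [LinearMap.trace_eq_matrix_trace ℂ (Pi.basisFun ℂ (Fin n)),
    LinearMap.trace_eq_matrix_trace ℂ (Pi.basisFun ℂ (Fin n)),
    LinearMap.toMatrix_eq_toMatrix', LinearMap.toMatrix'_toLin']
  simp [Matrix.trace, Matrix.diag, map_sum]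

noncomputable instance cardInv (H : Type) [Group H] [Fintype H] :
    Invertible ((Fintype.card H : ℂ)) :=
  invertibleOfNonzero (Nat.cast_ne_zero.mpr Fintype.card_ne_zero)

theorem sum_char_nat (H : Type) [Group H] [Fintype H] (V : FDRep ℂ H) :
    ∃ d : ℕ, ∑ g : H, V.character g = (Fintype.card H : ℂ) * d := by
  refine ⟨Module.finrank ℂ (Representation.invariants V.ρ), ?_⟩
  have h := FDRep.average_char_eq_finrank_invariants V
  rw [← h, ← mul_assoc, Nat.card_eq_fintype_card,
    mul_inv_cancel₀ (Nat.cast_ne_zero.mpr Fintype.card_ne_zero), one_mul]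

theorem key_nat (H : Type) [Group H] [Fintype H] (ϑ : H → ℂ) {n : ℕ}
    (ρ : Representation ℂ H (Fin n → ℂ))
    (hρ : ∀ g, ϑ g = LinearMap.trace ℂ (Fin n → ℂ) (ρ g)) (φ : H →* H) :
    ∃ d : ℕ, ∑ m : H, ϑ m * star (ϑ (φ m)) = (Fintype.card H : ℂ) * d := by
  set σ : Representation ℂ H (Fin n → ℂ) := (conjRep ρ).comp φ with hσ
  obtain ⟨d, hd⟩ := sum_char_nat H (FDRep.of ρ ⊗ FDRep.of σ)
  refine ⟨d, ?_⟩
  rw [← hd]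
  apply Finset.sum_congr rfl
  intro m _
  rw [FDRep.char_tensor]
  have h1 : (FDRep.of ρ).character m = ϑ m := (hρ m).symm
  have h2 : (FDRep.of σ).character m = star (ϑ (φ m)) := by
    rw [hρ]
    exact conjRep_trace ρ (φ m)
  rw [Pi.mul_apply, h1, h2]

/-- conjugation by `t : G` as a monoid hom of the normal subgroup. -/
def cHom {G : Type} [Group G] (N : Subgroup G) (hN : N.Normal) (t : G) : ↥N →* ↥N where
  toFun m := ⟨t * ↑m * t⁻¹, hN.conj_mem ↑m m.2 t⟩
  map_one' := by ext; simp
  map_mul' a b := by ext; simp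

theorem cHom_comp {G : Type} [Group G] (N : Subgroup G) (hN : N.Normal) (s t : G) (m : ↥N) :
    cHom N hN s (cHom N hN t m) = cHom N hN (s * t) m := by
  ext; simp [cHom]; group

theorem cHom_one {G : Type} [Group G] (N : Subgroup G) (hN : N.Normal) (m : ↥N) :
    cHom N hN 1 m = m := by ext; simp [cHom]

theorem cHom_bijective {G : Type} [Group G] (N : Subgroup G) (hN : N.Normal) (t : G) :
    Function.Bijective (cHom N hN t) := by
  apply Function.bijective_iff_has_inverse.mpr
  exact ⟨cHom N hN t⁻¹,
    fun m => by rw [cHom_comp, inv_mul_cancel, cHom_one],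
    fun m => by rw [cHom_comp, mul_inv_cancel, cHom_one]⟩

/-- if `N ⊴ G`, `ϑ ∈ Irr(N)` and `ϑ^G` is irreducible, then `C_G(N) ≤ N`. -/
theorem induced_irreducible_centralizer_le {G : Type} [Group G] [Fintype G]
    (N : Subgroup G) (hN : N.Normal) (ϑ : ↥N → ℂ) (hϑ : IsIrrChar ↥N ϑ)
    (hind : IsIrrChar G (Ind N ϑ)) :
    Subgroup.centralizer (N : Set G) ≤ N := by
  intro c hcent
  by_contra hc
  obtain ⟨⟨n, ρ, hρ⟩, hϑ2⟩ := hϑ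
  have hcardH : (Fintype.card ↥N : ℂ) ≠ 0 := Nat.cast_ne_zero.mpr Fintype.card_ne_zero
  have hcardG : (Fintype.card G : ℂ) ≠ 0 := Nat.cast_ne_zero.mpr Fintype.card_ne_zero
  -- class function property
  have hclass : ∀ a b : ↥N, ϑ (a * b * a⁻¹) = ϑ b := by
    intro a b
    rw [hρ, hρ]
    have hmm : ρ (a * b * a⁻¹) = ρ a * ρ b * ρ a⁻¹ := by rw [map_mul, map_mul]
    rw [hmm]
    have h1 : ρ a⁻¹ * ρ a = 1 := by rw [← map_mul, inv_mul_cancel, map_one]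
    calc LinearMap.trace ℂ (Fin n → ℂ) (ρ a * ρ b * ρ a⁻¹)
        = LinearMap.trace ℂ (Fin n → ℂ) (ρ a⁻¹ * (ρ a * ρ b)) := by
          rw [LinearMap.trace_mul_comm]
      _ = LinearMap.trace ℂ (Fin n → ℂ) (ρ b) := by rw [← mul_assoc, h1, one_mul]
  set A : G → ℂ := fun t => ∑ m : ↥N, ϑ m * star (ϑ (cHom N hN t m)) with hA
  have hAnat : ∀ t : G, ∃ k : ℕ, A t = (Fintype.card ↥N : ℂ) * k := fun t =>
    key_nat ↥N ϑ ρ hρ (cHom N hN t)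
  choose d hd using hAnat
  -- the self-inner-product of ϑ
  have hϑsum : ∑ m : ↥N, ϑ m * star (ϑ m) = (Fintype.card ↥N : ℂ) := by
    have h := hϑ2
    rw [cfInner] at h
    exact ((inv_mul_eq_one₀ hcardH).mp h).symm
  -- A t = |N| whenever conjugation by t fixes ϑ
  have hfix : ∀ t : G, (∀ m : ↥N, ϑ (cHom N hN t m) = ϑ m) → d t = 1 := by
    intro t ht
    have h1 : A t = (Fintype.card ↥N : ℂ) := by
      rw [hA]
      simp only [ht]
      exact hϑsum
    have h2 := hd t
    rw [h1] at h2
    have h3 : (Fintype.card ↥N : ℂ) * (d t : ℂ) = (Fintype.card ↥N : ℂ) * 1 := by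
      rw [← h2, mul_one]
    have h4 := mul_left_cancel₀ hcardH h3
    exact_mod_cast h4
  have hdN : ∀ m₀ : ↥N, d ↑m₀ = 1 := by
    intro m₀
    apply hfix
    intro m
    have h : cHom N hN ↑m₀ m = m₀ * m * m₀⁻¹ := by
      ext; simp only [cHom, MonoidHom.coe_mk, OneHom.coe_mk]; push_cast; rfl
    rw [h, hclass]
  have hdNc : ∀ m₀ : ↥N, d (↑m₀ * c) = 1 := by
    intro m₀
    apply hfix
    intro m
    have hcm : c * (m : G) * c⁻¹ = (m : G) := by
      have h := Subgroup.mem_centralizer_iff.mp hcent ↑m m.2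
      rw [show c * (m : G) = ↑m * c from h.symm, mul_inv_cancel_right]
    have h : cHom N hN (↑m₀ * c) m = m₀ * m * m₀⁻¹ := by
      ext
      simp only [cHom, MonoidHom.coe_mk, OneHom.coe_mk]
      push_cast
      calc (↑m₀ * c) * (m : G) * (↑m₀ * c)⁻¹
          = ↑m₀ * (c * (m : G) * c⁻¹) * (↑m₀ : G)⁻¹ := by group
        _ = ↑m₀ * ↑m * (↑m₀ : G)⁻¹ := by rw [hcm]
    rw [h, hclass]
  -- main identity : ∑ t, A t = |N|^2
  -- value of the induced character
  have hχ : ∀ g : G, Ind N ϑ g =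
      if h : g ∈ N then (Fintype.card ↥N : ℂ)⁻¹ * ∑ x : G, ϑ (cHom N hN x ⟨g, h⟩) else 0 := by
    intro g
    by_cases h : g ∈ N
    · rw [dif_pos h, Ind]
      congr 1
      apply Finset.sum_congr rfl
      intro x _
      rw [dif_pos (hN.conj_mem g h x)]
      rfl
    · rw [dif_neg h, Ind]
      have hz : ∀ x : G, (if hx : x * g * x⁻¹ ∈ N then ϑ ⟨x * g * x⁻¹, hx⟩ else 0) = 0 := by
        intro x
        rw [dif_neg]
        intro hx
        apply h
        have h2 := hN.conj_mem _ hx x⁻¹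
        have h3 : x⁻¹ * (x * g * x⁻¹) * x⁻¹⁻¹ = g := by group
        rwa [h3] at h2
      simp only [hz, Finset.sum_const_zero, mul_zero]
  -- restrict the sum to N
  have hsum1 : ∑ g : G, Ind N ϑ g * star (Ind N ϑ g)
      = ∑ m : ↥N, Ind N ϑ ↑m * star (Ind N ϑ ↑m) := by
    have e1 : ∑ g ∈ Finset.univ.filter (· ∈ N), Ind N ϑ g * star (Ind N ϑ g)
        = ∑ g : G, Ind N ϑ g * star (Ind N ϑ g) := by
      apply Finset.sum_filter_of_ne
      intro x _ hx
      by_contra hmem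
      rw [hχ x, dif_neg hmem] at hx
      simp at hx
    rw [← e1, Finset.sum_subtype (p := (· ∈ N)) (Finset.univ.filter (· ∈ N)) (by simp)
      (fun g => Ind N ϑ g * star (Ind N ϑ g))]
  -- the inner reindexing
  have hinner : ∀ x y : G, ∑ m : ↥N, ϑ (cHom N hN x m) * star (ϑ (cHom N hN y m))
      = A (y * x⁻¹) := by
    intro x y
    rw [hA]
    refine Fintype.sum_bijective (cHom N hN x) (cHom_bijective N hN x) _ _ ?_
    intro m
    have h1 : cHom N hN (y * x⁻¹) (cHom N hN x m) = cHom N hN y m := by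
      rw [cHom_comp]
      congr 1
      group
    rw [h1]
  -- each diagonal term
  have hm : ∀ m : ↥N, Ind N ϑ ↑m * star (Ind N ϑ ↑m)
      = (Fintype.card ↥N : ℂ)⁻¹ * (Fintype.card ↥N : ℂ)⁻¹ *
        ∑ x : G, ∑ y : G, ϑ (cHom N hN x m) * star (ϑ (cHom N hN y m)) := by
    intro m
    rw [hχ ↑m, dif_pos m.2]
    simp only [Subtype.coe_eta]
    rw [star_mul', star_sum, ← Finset.sum_mul_sum]
    have hsc : star ((Fintype.card ↥N : ℂ)⁻¹) = (Fintype.card ↥N : ℂ)⁻¹ := by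
      rw [star_inv₀]
      norm_cast
    rw [hsc]
    ring
  -- assemble
  have hmain : ∑ t : G, A t = (Fintype.card ↥N : ℂ) ^ 2 := by
    have h2 := hind.2
    rw [cfInner] at h2
    have h3 : ∑ g : G, Ind N ϑ g * star (Ind N ϑ g)
        = (Fintype.card ↥N : ℂ)⁻¹ * (Fintype.card ↥N : ℂ)⁻¹ *
          ((Fintype.card G : ℂ) * ∑ t : G, A t) := by
      rw [hsum1]
      simp_rw [hm]
      rw [← Finset.mul_sum]
      congr 1
      rw [Finset.sum_comm]
      have h4 : ∀ x : G, ∑ m : ↥N, ∑ y : G, ϑ (cHom N hN x m) * star (ϑ (cHom N hN y m))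
          = ∑ t : G, A t := by
        intro x
        rw [Finset.sum_comm]
        have h5 : ∀ y : G, ∑ m : ↥N, ϑ (cHom N hN x m) * star (ϑ (cHom N hN y m))
            = A (y * x⁻¹) := fun y => hinner x y
        simp_rw [h5]
        exact Equiv.sum_comp (Equiv.mulRight x⁻¹) A
      simp_rw [h4]
      rw [Finset.sum_const, Finset.card_univ, nsmul_eq_mul]
    rw [h3] at h2
    field_simp at h2
    linear_combination h2
  -- conclude
  have hsumd : ∑ t : G, d t = Fintype.card ↥N := by
    have h1 : (Fintype.card ↥N : ℂ) * ∑ t : G, (d t : ℂ)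
        = (Fintype.card ↥N : ℂ) * (Fintype.card ↥N : ℂ) := by
      rw [Finset.mul_sum]
      simp_rw [← hd]
      rw [hmain]; ring
    have h2 : (∑ t : G, (d t : ℂ)) = (Fintype.card ↥N : ℂ) :=
      mul_left_cancel₀ hcardH h1
    exact_mod_cast h2
  set ι : ↥N ⊕ ↥N → G := fun x => Sum.elim (fun m : ↥N => (m : G)) (fun m : ↥N => (m : G) * c) x
    with hι
  have hinj : Function.Injective ι := by
    rintro (a | a) (b | b) hab <;> simp only [hι, Sum.elim_inl, Sum.elim_inr] at hab
    · exact congrArg Sum.inl (Subtype.ext hab)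
    · exfalso
      apply hc
      have hce : c = (↑b : G)⁻¹ * ↑a := by rw [hab]; group
      rw [hce]
      exact mul_mem (inv_mem b.2) a.2
    · exfalso
      apply hc
      have hce : c = (↑a : G)⁻¹ * ↑b := by rw [← hab]; group
      rw [hce]
      exact mul_mem (inv_mem a.2) b.2
    · exact congrArg Sum.inr (Subtype.ext (mul_right_cancel hab))
  have hge : 2 * Fintype.card ↥N ≤ ∑ t : G, d t := by
    have h1 : ∑ x : ↥N ⊕ ↥N, d (ι x) = 2 * Fintype.card ↥N := by
      rw [Fintype.sum_sum_type]
      simp only [hι, Sum.elim_inl, Sum.elim_inr]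
      simp [hdN, hdNc, two_mul]
    rw [← h1]
    rw [← Finset.sum_image (fun a _ b _ h => hinj h)]
    apply Finset.sum_le_sum_of_subset
    intro x _
    exact Finset.mem_univ x
  rw [hsumd] at hge
  have hpos : 0 < Fintype.card ↥N := Fintype.card_pos
  omega

end CTC
end

section
/- Let G be a finite group, p a prime, and Z ≤ Z(G) a p-subgroup with Z < O_p(G). Let 𝔑(G,Z) be the set of chains Z = D_0 < D_1 < ... < D_n of p-subgroups of G such that each D_i is normal in D_n. Then there is a self-inverse bijection *: 𝔑(G,Z) → 𝔑(G,Z) such that |δ*| = |δ| ± 1, the stabilizers satisfy G_δ = G_{δ*}, and * commutes with the conjugation action of N_Aut := any group of automorphisms of G fixing Z (in particular with G-conjugation). -/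
open scoped BigOperators Classical

namespace CTC

/-- `O_p(G)`, the largest normal `p`-subgroup of `G`: the intersection of the
Sylow `p`-subgroups. -/
noncomputable def pCore (p : ℕ) (G : Type) [Group G] : Subgroup G :=
  ⨅ P : Sylow p G, (P : Subgroup G)

/-- A normal `p`-chain `Z = D_0 < D_1 < ... < D_n` of `p`-subgroups of `G`
starting at `Z`, with every term normal in the last one. -/
structure NormalPChain (p : ℕ) (G : Type) [Group G] (Z : Subgroup G) where
  n : ℕ
  D : Fin (n + 1) → Subgroup G
  strictMono : StrictMono D
  first : D 0 = Z
  isPGroup : ∀ i, IsPGroup p (D i)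
  normalInLast : ∀ i, ((D i).subgroupOf (D (Fin.last n))).Normal

/-- The stabilizer `G_δ = ⋂ᵢ N_G(Dᵢ)` of a chain. -/
def stabChain {p : ℕ} {G : Type} [Group G] {Z : Subgroup G}
    (δ : NormalPChain p G Z) : Subgroup G :=
  ⨅ i, Subgroup.normalizer (δ.D i : Set G)

/-- The image of a chain under an automorphism of `G` fixing `Z`. -/
def mapChain {p : ℕ} {G : Type} [Group G] {Z : Subgroup G}
    (σ : MulAut G) (hσ : Z.map σ.toMonoidHom = Z)
    (δ : NormalPChain p G Z) : NormalPChain p G Z where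
  n := δ.n
  D := fun i => (δ.D i).map σ.toMonoidHom
  strictMono := by
    intro i j hij
    have h1 : (δ.D i).map σ.toMonoidHom ≤ (δ.D j).map σ.toMonoidHom :=
      Subgroup.map_mono (δ.strictMono hij).le
    have h2 : (δ.D i).map σ.toMonoidHom ≠ (δ.D j).map σ.toMonoidHom := by
      intro h
      exact (δ.strictMono hij).ne (Subgroup.map_injective σ.injective h)
    exact lt_of_le_of_ne h1 h2
  first := by show (δ.D 0).map σ.toMonoidHom = Z; rw [δ.first, hσ]
  isPGroup := fun i => (δ.isPGroup i).map _
  normalInLast := by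
    intro i
    have h := δ.normalInLast i
    constructor
    rintro a ha b
    rw [Subgroup.mem_subgroupOf] at ha ⊢
    obtain ⟨v, hv, hva⟩ := ha
    obtain ⟨u, hu, hub⟩ := b.2
    have hvlast : v ∈ δ.D (Fin.last δ.n) := δ.strictMono.monotone (Fin.le_last i) hv
    have hconj := h.conj_mem ⟨v, hvlast⟩ (by rwa [Subgroup.mem_subgroupOf]) ⟨u, hu⟩
    rw [Subgroup.mem_subgroupOf] at hconj
    refine ⟨u * v * u⁻¹, hconj, ?_⟩
    push_cast
    rw [map_mul, map_mul, map_inv, hva, hub]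

section Aux

variable {G : Type} [Group G] [Fintype G] {p : ℕ} {Z : Subgroup G}

open Subgroup

/-- Membership in the normalizer of a sup. -/
lemma mem_normalizer_sup {A B : Subgroup G} {x : G}
    (ha : x ∈ (Subgroup.normalizer (A : Set G))) (hb : x ∈ (Subgroup.normalizer (B : Set G))) : x ∈ (Subgroup.normalizer ((A ⊔ B : Subgroup G) : Set G)) := by
  have key : ∀ y : G, y ∈ (Subgroup.normalizer (A : Set G)) → y ∈ (Subgroup.normalizer (B : Set G)) →
      ∀ h ∈ A ⊔ B, y * h * y⁻¹ ∈ A ⊔ B := by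
    intro y hya hyb h hh
    have hle : (A ⊔ B) ≤ Subgroup.comap (MulAut.conj y).toMonoidHom (A ⊔ B) := by
      apply sup_le
      · intro a haA
        simp only [Subgroup.mem_comap, MulAut.conj_apply, MulEquiv.coe_toMonoidHom]
        exact Subgroup.mem_sup_left ((Subgroup.mem_normalizer_iff.mp hya a).mp haA)
      · intro b hbB
        simp only [Subgroup.mem_comap, MulAut.conj_apply, MulEquiv.coe_toMonoidHom]
        exact Subgroup.mem_sup_right ((Subgroup.mem_normalizer_iff.mp hyb b).mp hbB)
    simpa using hle hh
  rw [Subgroup.mem_normalizer_iff]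
  intro h
  constructor
  · exact fun hh => key x ha hb h hh
  · intro hh
    have h2 := key x⁻¹ (inv_mem ha) (inv_mem hb) _ hh
    have h3 : x⁻¹ * (x * h * x⁻¹) * x⁻¹⁻¹ = h := by group
    rwa [h3] at h2

lemma pCore_isPGroup (hp : p.Prime) : IsPGroup p (pCore p G) := by
  haveI : Fact p.Prime := ⟨hp⟩
  obtain ⟨P⟩ := (inferInstance : Nonempty (Sylow p G))
  exact IsPGroup.to_le P.isPGroup' (iInf_le _ P)

lemma pCore_map (hp : p.Prime) (σ : MulAut G) :
    (pCore p G).map σ.toMonoidHom = pCore p G := by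
  haveI : Fact p.Prime := ⟨hp⟩
  have hP : ∀ P : Sylow p G, (P : Subgroup G).map σ.toMonoidHom = ↑(σ • P) := by
    intro P
    ext x
    rw [Subgroup.mem_map_equiv]
    rw [Sylow.pointwise_smul_def]
    rw [Subgroup.mem_pointwise_smul_iff_inv_smul_mem]
    rfl
  rw [pCore, Subgroup.map_iInf σ.toMonoidHom σ.injective]
  simp_rw [hP]
  apply le_antisymm
  · refine le_iInf fun Q => iInf_le_of_le (σ⁻¹ • Q) ?_
    rw [smul_inv_smul]
  · exact le_iInf fun Q => iInf_le (fun P : Sylow p G => (P : Subgroup G)) (σ • Q)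

lemma pCore_normal (hp : p.Prime) : (pCore p G).Normal := by
  constructor
  intro n hn g
  have h := pCore_map (G := G) hp (MulAut.conj g)
  rw [← h]
  exact ⟨n, hn, rfl⟩

lemma zNormal (hZc : Z ≤ Subgroup.center G) : Z.Normal := by
  constructor
  intro n hn g
  have h := (Subgroup.mem_center_iff.mp (hZc hn)) g
  have : g * n * g⁻¹ = n := by rw [h]; group
  rwa [this]

/-- The canonical subgroup `Y`: elements of `O_p(G)` whose commutators with `P` land in `Z`. -/
def Yof (p : ℕ) (Z : Subgroup G) (hZc : Z ≤ Subgroup.center G) (P : Subgroup G) :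
    Subgroup G where
  carrier := {g | g ∈ pCore p G ∧ ∀ x ∈ P, g * x * g⁻¹ * x⁻¹ ∈ Z}
  one_mem' := ⟨(pCore p G).one_mem, fun x _ => by simpa using Z.one_mem⟩
  mul_mem' := by
    rintro a b ⟨haR, ha⟩ ⟨hbR, hb⟩
    refine ⟨mul_mem haR hbR, fun x hx => ?_⟩
    have hbz := hb x hx
    have haz := ha x hx
    have hc : a * (b * x * b⁻¹ * x⁻¹) = (b * x * b⁻¹ * x⁻¹) * a :=
      Subgroup.mem_center_iff.mp (hZc hbz) a
    have e1 : a * b * x * (a * b)⁻¹ * x⁻¹ = (a * (b * x * b⁻¹ * x⁻¹)) * (x * a⁻¹ * x⁻¹) := by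
      group
    have e2 : ((b * x * b⁻¹ * x⁻¹) * a) * (x * a⁻¹ * x⁻¹) =
        (b * x * b⁻¹ * x⁻¹) * (a * x * a⁻¹ * x⁻¹) := by group
    rw [e1, hc, e2]
    exact mul_mem hbz haz
  inv_mem' := by
    rintro a ⟨haR, ha⟩
    refine ⟨inv_mem haR, fun x hx => ?_⟩
    have haz := ha x hx
    have hw : (a * x * a⁻¹ * x⁻¹)⁻¹ ∈ Z := inv_mem haz
    have hc : a⁻¹ * (a * x * a⁻¹ * x⁻¹)⁻¹ = (a * x * a⁻¹ * x⁻¹)⁻¹ * a⁻¹ :=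
      Subgroup.mem_center_iff.mp (hZc hw) a⁻¹
    have e1 : a⁻¹ * x * a⁻¹⁻¹ * x⁻¹ = (a⁻¹ * (a * x * a⁻¹ * x⁻¹)⁻¹) * a := by group
    rw [e1, hc]
    have e2 : (a * x * a⁻¹ * x⁻¹)⁻¹ * a⁻¹ * a = (a * x * a⁻¹ * x⁻¹)⁻¹ := by group
    rw [e2]
    exact hw

lemma Yof_le_pCore (hZc : Z ≤ Subgroup.center G) (P : Subgroup G) :
    Yof p Z hZc P ≤ pCore p G := fun _ hg => hg.1

lemma zle_Yof (hZc : Z ≤ Subgroup.center G) (hZR : Z ≤ pCore p G) (P : Subgroup G) :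
    Z ≤ Yof p Z hZc P := by
  intro z hz
  refine ⟨hZR hz, fun x _ => ?_⟩
  have h := (Subgroup.mem_center_iff.mp (hZc hz)) x
  have : z * x * z⁻¹ * x⁻¹ = 1 := by
    rw [show z * x = x * z from h.symm]; group
  rw [this]; exact Z.one_mem

/-- `Y` normalizes every subgroup between `Z` and `P`. -/
lemma Yof_le_normalizer (hZc : Z ≤ Subgroup.center G) {P E : Subgroup G}
    (hZE : Z ≤ E) (hEP : E ≤ P) : Yof p Z hZc P ≤ (Subgroup.normalizer (E : Set G)) := by
  have key : ∀ y, y ∈ Yof p Z hZc P → ∀ h ∈ E, y * h * y⁻¹ ∈ E := by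
    intro y hy h hh
    have hz := hy.2 h (hEP hh)
    have e : y * h * y⁻¹ = (y * h * y⁻¹ * h⁻¹) * h := by group
    rw [e]
    exact mul_mem (hZE hz) hh
  intro y hy
  rw [Subgroup.mem_normalizer_iff]
  intro h
  constructor
  · exact fun hh => key y hy h hh
  · intro hh
    have h2 := key y⁻¹ (inv_mem hy) _ hh
    have h3 : y⁻¹ * (y * h * y⁻¹) * y⁻¹⁻¹ = h := by group
    rwa [h3] at h2

/-- Anything normalizing `P` normalizes `Y`. -/
lemma normalizer_le_Yof (hp : p.Prime) (hZc : Z ≤ Subgroup.center G) {P : Subgroup G}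
    {x : G} (hx : x ∈ (Subgroup.normalizer (P : Set G))) : x ∈ (Subgroup.normalizer ((Yof p Z hZc P) : Set G)) := by
  haveI := pCore_normal (G := G) hp
  have key : ∀ y, y ∈ (Subgroup.normalizer (P : Set G)) → ∀ h ∈ Yof p Z hZc P, y * h * y⁻¹ ∈ Yof p Z hZc P := by
    intro y hy h hh
    refine ⟨(pCore_normal hp).conj_mem h hh.1 y, fun w hw => ?_⟩
    have hw' : y⁻¹ * w * y ∈ P := by
      have := (Subgroup.mem_normalizer_iff.mp (inv_mem hy) w).mp hw
      simpa using this
    have hc : h * (y⁻¹ * w * y) * h⁻¹ * (y⁻¹ * w * y)⁻¹ ∈ Z := hh.2 _ hw'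
    have hcomm : y * (h * (y⁻¹ * w * y) * h⁻¹ * (y⁻¹ * w * y)⁻¹) =
        (h * (y⁻¹ * w * y) * h⁻¹ * (y⁻¹ * w * y)⁻¹) * y :=
      Subgroup.mem_center_iff.mp (hZc hc) y
    have e : (y * h * y⁻¹) * w * (y * h * y⁻¹)⁻¹ * w⁻¹ =
        (y * (h * (y⁻¹ * w * y) * h⁻¹ * (y⁻¹ * w * y)⁻¹)) * y⁻¹ := by group
    rw [e, hcomm]
    have e2 : (h * (y⁻¹ * w * y) * h⁻¹ * (y⁻¹ * w * y)⁻¹) * y * y⁻¹ =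
        h * (y⁻¹ * w * y) * h⁻¹ * (y⁻¹ * w * y)⁻¹ := by group
    rw [e2]
    exact hc
  rw [Subgroup.mem_normalizer_iff]
  intro h
  constructor
  · exact fun hh => key x hx h hh
  · intro hh
    have h2 := key x⁻¹ (inv_mem hx) _ hh
    have h3 : x⁻¹ * (x * h * x⁻¹) * x⁻¹⁻¹ = h := by group
    rwa [h3] at h2

/-- Equivariance of `Yof` under automorphisms fixing `Z`. -/
lemma Yof_map (hp : p.Prime) (hZc : Z ≤ Subgroup.center G) (σ : MulAut G)
    (hσ : Z.map σ.toMonoidHom = Z) (P : Subgroup G) :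
    (Yof p Z hZc P).map σ.toMonoidHom = Yof p Z hZc (P.map σ.toMonoidHom) := by
  have hZiff : ∀ g : G, g ∈ Z ↔ σ g ∈ Z := by
    intro g
    constructor
    · intro hg; rw [← hσ]; exact ⟨g, hg, rfl⟩
    · intro hg
      rw [← hσ] at hg
      obtain ⟨w, hw, hww⟩ := hg
      have : w = g := σ.injective hww
      rwa [← this]
  ext x
  rw [Subgroup.mem_map_equiv]
  constructor
  · rintro ⟨hR, hcom⟩
    constructor
    · have : (σ.symm x : G) ∈ pCore p G := hR
      have h2 : σ (σ.symm x) ∈ (pCore p G).map σ.toMonoidHom := ⟨_, this, rfl⟩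
      rwa [pCore_map hp σ, σ.apply_symm_apply] at h2
    · rintro w ⟨v, hv, rfl⟩
      have h3 := hcom v hv
      have h4 := (hZiff _).mp h3
      have e : σ (σ.symm x * v * (σ.symm x)⁻¹ * v⁻¹) =
          x * (σ.toMonoidHom v) * x⁻¹ * (σ.toMonoidHom v)⁻¹ := by
        simp [map_mul, map_inv]
      rwa [e] at h4
  · rintro ⟨hR, hcom⟩
    constructor
    · have : x ∈ (pCore p G).map σ.toMonoidHom := by rw [pCore_map hp σ]; exact hR
      obtain ⟨v, hv, hvx⟩ := this
      have : σ.symm x = v := by rw [← hvx]; exact σ.symm_apply_apply v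
      rwa [this]
    · intro v hv
      have h3 := hcom (σ.toMonoidHom v) ⟨v, hv, rfl⟩
      rw [hZiff _]
      have e : σ (σ.symm x * v * (σ.symm x)⁻¹ * v⁻¹) =
          x * (σ.toMonoidHom v) * x⁻¹ * (σ.toMonoidHom v)⁻¹ := by
        simp [map_mul, map_inv]
      rwa [e]

/-- The key nontriviality: `Y` is strictly bigger than `Z`. -/
lemma exists_Yof (hp : p.Prime) (hZc : Z ≤ Subgroup.center G) (hlt : Z < pCore p G)
    {P : Subgroup G} (hRP : pCore p G ≤ P) (hPp : IsPGroup p P) :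
    ∃ y, y ∈ Yof p Z hZc P ∧ y ∉ Z := by
  haveI : Fact p.Prime := ⟨hp⟩
  haveI hZn : Z.Normal := zNormal hZc
  haveI hRn : (pCore p G).Normal := pCore_normal hp
  set mk : G →* G ⧸ Z := QuotientGroup.mk' Z with hmkdef
  set Rb : Subgroup (G ⧸ Z) := (pCore p G).map mk with hRb
  set Pb : Subgroup (G ⧸ Z) := P.map mk with hPb
  haveI hRbn : Rb.Normal := hRn.map mk (QuotientGroup.mk'_surjective Z)
  have hRbp : IsPGroup p Rb := (pCore_isPGroup hp).map mk
  have hPbp : IsPGroup p Pb := hPp.map mk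
  -- the conjugation action of Pb on Rb
  letI act : MulAction Pb Rb :=
    { smul := fun g r => ⟨(g : G ⧸ Z) * r * (g : G ⧸ Z)⁻¹, hRbn.conj_mem r r.2 g⟩
      one_smul := fun r => by
        apply Subtype.ext; show (1 : G ⧸ Z) * r * (1 : G ⧸ Z)⁻¹ = r; group
      mul_smul := fun g h r => by
        apply Subtype.ext
        show ((g * h : Pb) : G ⧸ Z) * r * ((g * h : Pb) : G ⧸ Z)⁻¹ =
          (g : G ⧸ Z) * ((h : G ⧸ Z) * r * (h : G ⧸ Z)⁻¹) * (g : G ⧸ Z)⁻¹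
        push_cast
        group }
  have smul_def' : ∀ (g : Pb) (r : Rb),
      ((g • r : Rb) : G ⧸ Z) = (g : G ⧸ Z) * r * (g : G ⧸ Z)⁻¹ := fun _ _ => rfl
  -- 1 is a fixed point
  have h1fix : (1 : Rb) ∈ MulAction.fixedPoints Pb Rb := by
    intro g
    apply Subtype.ext
    rw [smul_def']
    show (g : G ⧸ Z) * ((1 : Rb) : G ⧸ Z) * (g : G ⧸ Z)⁻¹ = ((1 : Rb) : G ⧸ Z)
    simp
  -- Rb is nontrivial
  obtain ⟨r0, hr0R, hr0Z⟩ := SetLike.exists_of_lt hlt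
  have hr0b : mk r0 ∈ Rb := ⟨r0, hr0R, rfl⟩
  have hr0ne : mk r0 ≠ 1 := by
    intro h
    exact hr0Z ((QuotientGroup.eq_one_iff r0).mp h)
  have hnontriv : Nontrivial Rb :=
    ⟨⟨⟨mk r0, hr0b⟩, 1, fun h => hr0ne (congrArg Subtype.val h)⟩⟩
  -- p divides card Rb
  have hdvd : p ∣ Nat.card Rb := by
    obtain ⟨k, hk⟩ := IsPGroup.iff_card.mp hRbp
    rcases Nat.eq_zero_or_pos k with hk0 | hkpos
    · exfalso
      rw [hk0, pow_zero] at hk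
      haveI := hnontriv
      have := Finite.one_lt_card (α := Rb)
      omega
    · rw [hk]; exact dvd_pow_self p (Nat.pos_iff_ne_zero.mp hkpos)
  obtain ⟨b, hbfix, hbne⟩ :=
    hPbp.exists_fixed_point_of_prime_dvd_card_of_fixed_point (α := Rb) hdvd h1fix
  obtain ⟨y, hy⟩ := QuotientGroup.mk'_surjective Z (b : G ⧸ Z)
  -- y ∈ pCore
  obtain ⟨r, hrR, hrb⟩ := b.2
  have hyR : y ∈ pCore p G := by
    have : mk r = mk y := by rw [hrb, hy]
    have h2 : r⁻¹ * y ∈ Z := by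
      apply (QuotientGroup.eq_one_iff _).mp
      show mk (r⁻¹ * y) = 1
      rw [map_mul, map_inv, this]
      group
    have he : y = r * (r⁻¹ * y) := by group
    rw [he]
    exact mul_mem hrR (hlt.le h2)
  have hyZ : y ∉ Z := by
    intro h
    apply hbne
    apply Subtype.ext
    rw [← hy]
    exact ((QuotientGroup.eq_one_iff y).mpr h).symm
  refine ⟨y, ⟨hyR, ?_⟩, hyZ⟩
  intro x hx
  have hxPb : (mk x) ∈ Pb := ⟨x, hx, rfl⟩
  have hfix := hbfix ⟨mk x, hxPb⟩
  have hcomm : (mk x) * (b : G ⧸ Z) * (mk x)⁻¹ = (b : G ⧸ Z) := by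
    have := congrArg Subtype.val hfix
    rwa [smul_def'] at this
  rw [← hy] at hcomm
  have hcm : (mk x) * (mk y) = (mk y) * (mk x) := by
    have := congrArg (· * (mk x)) hcomm
    simpa [mul_assoc, hmkdef] using this
  apply (QuotientGroup.eq_one_iff _).mp
  show mk (y * x * y⁻¹ * x⁻¹) = 1
  have e : mk (y * x * y⁻¹ * x⁻¹) = mk y * mk x * (mk y)⁻¹ * (mk x)⁻¹ := by
    rw [map_mul, map_mul, map_mul, map_inv, map_inv]
  rw [e, ← hcm]
  group

/-! ### Finite chains as finsets -/

/-- A valid finset of subgroups representing a normal `p`-chain. -/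
structure GoodF (p : ℕ) (G : Type) [Group G] (Z : Subgroup G)
    (C : Finset (Subgroup G)) : Prop where
  zmem : Z ∈ C
  zle : ∀ D ∈ C, Z ≤ D
  total : ∀ D ∈ C, ∀ E ∈ C, D ≤ E ∨ E ≤ D
  pgrp : ∀ D ∈ C, IsPGroup p D
  nlast : ∀ D ∈ C, ∀ E ∈ C, (∀ F ∈ C, F ≤ E) → E ≤ (Subgroup.normalizer (D : Set G))

/-- The greatest element of a finset of subgroups (junk value if none). -/
noncomputable def greatestOf (C : Finset (Subgroup G)) : Subgroup G :=
  if h : ∃ M ∈ C, ∀ D ∈ C, D ≤ M then h.choose else ⊥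

lemma greatestOf_spec {C : Finset (Subgroup G)} (h : ∃ M ∈ C, ∀ D ∈ C, D ≤ M) :
    greatestOf C ∈ C ∧ ∀ D ∈ C, D ≤ greatestOf C := by
  rw [greatestOf, dif_pos h]
  exact ⟨h.choose_spec.1, h.choose_spec.2⟩

lemma greatestOf_eq {C : Finset (Finset (Subgroup G) → Subgroup G) → Unit} : True := trivial

lemma greatestOf_eq_of {C : Finset (Subgroup G)} {M : Subgroup G}
    (hM : M ∈ C) (hMax : ∀ D ∈ C, D ≤ M) : greatestOf C = M := by
  have h : ∃ M ∈ C, ∀ D ∈ C, D ≤ M := ⟨M, hM, hMax⟩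
  have hs := greatestOf_spec h
  exact le_antisymm (hMax _ hs.1) (hs.2 M hM)

lemma exists_greatest {C : Finset (Subgroup G)}
    (hne : C.Nonempty) (htot : ∀ D ∈ C, ∀ E ∈ C, D ≤ E ∨ E ≤ D) :
    ∃ M ∈ C, ∀ D ∈ C, D ≤ M := by
  obtain ⟨m, hm, hmax⟩ := C.exists_maximal hne
  refine ⟨m, hm, fun D hD => ?_⟩
  rcases htot D hD m hm with h1 | h1
  · exact h1
  · rcases eq_or_lt_of_le h1 with h2 | h2
    · exact h2.ge
    · exact absurd (hmax hD h2.le) (not_le_of_gt h2)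

/-- The enumeration of a valid finset as an order isomorphism. -/
noncomputable def enum {C : Finset (Subgroup G)} (h : GoodF p G Z C) :
    Fin (C.card - 1 + 1) ≃o {x // x ∈ C} := by
  letI lin : LinearOrder {x // x ∈ C} :=
    { (inferInstance : PartialOrder {x // x ∈ C}) with
      le_total := fun a b => h.total a a.2 b b.2
      toDecidableLE := Classical.decRel _ }
  have hcard : Fintype.card {x // x ∈ C} = C.card - 1 + 1 := by
    rw [Fintype.card_coe]
    have : 0 < C.card := Finset.card_pos.mpr ⟨Z, h.zmem⟩
    omega
  exact monoEquivOfFin _ hcard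

/-- The chain associated to a valid finset. -/
noncomputable def toChain (p : ℕ) {G : Type} [Group G] (Z : Subgroup G)
    (C : Finset (Subgroup G)) (h : GoodF p G Z C) : NormalPChain p G Z where
  n := C.card - 1
  D := fun i => ((enum h i : {x // x ∈ C}) : Subgroup G)
  strictMono := by
    intro i j hij
    exact Subtype.coe_lt_coe.mpr ((enum h).strictMono hij)
  isPGroup := fun i => h.pgrp _ (enum h i).2
  first := by
    have h0mem : ((enum h 0 : {x // x ∈ C}) : Subgroup G) ∈ C := (enum h 0).2
    have hZle : Z ≤ (enum h 0 : {x // x ∈ C}) := h.zle _ h0mem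
    have hle : ((enum h 0 : {x // x ∈ C}) : Subgroup G) ≤ Z := by
      have hi0 := (enum h).monotone (Fin.zero_le ((enum h).symm ⟨Z, h.zmem⟩))
      rw [OrderIso.apply_symm_apply] at hi0
      exact hi0
    exact le_antisymm hle hZle
  normalInLast := by
    intro i
    have hDle : ∀ F ∈ C, F ≤ ((enum h (Fin.last _) : {x // x ∈ C}) : Subgroup G) := by
      intro F hF
      have := (enum h).monotone (Fin.le_last ((enum h).symm ⟨F, hF⟩))
      rw [OrderIso.apply_symm_apply] at this
      exact this
    have hnorm := h.nlast _ (enum h i).2 _ (enum h (Fin.last _)).2 hDle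
    have hle : ((enum h i : {x // x ∈ C}) : Subgroup G) ≤
        ((enum h (Fin.last _) : {x // x ∈ C}) : Subgroup G) := hDle _ (enum h i).2
    rw [Subgroup.normal_subgroupOf_iff hle]
    intro a k hak hk
    exact (Subgroup.mem_normalizer_iff.mp (hnorm hk) a).mp hak

/-- The finset of values of a chain. -/
noncomputable def chainSet {p : ℕ} {G : Type} [Group G] {Z : Subgroup G}
    (δ : NormalPChain p G Z) : Finset (Subgroup G) :=
  Finset.image δ.D Finset.univ

lemma mem_chainSet {δ : NormalPChain p G Z} {E : Subgroup G} :
    E ∈ chainSet δ ↔ ∃ i, δ.D i = E := by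
  simp [chainSet]

lemma chainSet_toChain {C : Finset (Subgroup G)} (h : GoodF p G Z C) :
    chainSet (toChain p Z C h) = C := by
  ext E
  rw [mem_chainSet]
  constructor
  · rintro ⟨i, rfl⟩
    exact (enum h i).2
  · intro hE
    refine ⟨(enum h).symm ⟨E, hE⟩, ?_⟩
    show ((enum h ((enum h).symm ⟨E, hE⟩) : {x // x ∈ C}) : Subgroup G) = E
    rw [OrderIso.apply_symm_apply]

lemma card_chainSet (δ : NormalPChain p G Z) : (chainSet δ).card = δ.n + 1 := by
  rw [chainSet, Finset.card_image_of_injective _ δ.strictMono.injective,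
    Finset.card_univ, Fintype.card_fin]

lemma good_chainSet (δ : NormalPChain p G Z) : GoodF p G Z (chainSet δ) := by
  constructor
  · exact mem_chainSet.mpr ⟨0, δ.first⟩
  · rintro D hD
    obtain ⟨i, rfl⟩ := mem_chainSet.mp hD
    have hm := δ.strictMono.monotone (Fin.zero_le i)
    rwa [δ.first] at hm
  · rintro D hD E hE
    obtain ⟨i, rfl⟩ := mem_chainSet.mp hD
    obtain ⟨j, rfl⟩ := mem_chainSet.mp hE
    rcases le_total i j with hij | hij
    · exact Or.inl (δ.strictMono.monotone hij)
    · exact Or.inr (δ.strictMono.monotone hij)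
  · rintro D hD
    obtain ⟨i, rfl⟩ := mem_chainSet.mp hD
    exact δ.isPGroup i
  · rintro D hD E hE hmax
    obtain ⟨i, rfl⟩ := mem_chainSet.mp hD
    obtain ⟨j, rfl⟩ := mem_chainSet.mp hE
    have h1 : δ.D (Fin.last δ.n) ≤ δ.D j := hmax _ (mem_chainSet.mpr ⟨Fin.last δ.n, rfl⟩)
    have h2 : δ.D j ≤ δ.D (Fin.last δ.n) := δ.strictMono.monotone (Fin.le_last j)
    have hEq : δ.D j = δ.D (Fin.last δ.n) := le_antisymm h2 h1
    rw [hEq]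
    exact Subgroup.le_normalizer_of_normal_subgroupOf (hK := δ.normalInLast i)
      (δ.strictMono.monotone (Fin.le_last i))

/-- Chains with the same value set are equal. -/
lemma chain_ext {δ₁ δ₂ : NormalPChain p G Z} (h : chainSet δ₁ = chainSet δ₂) :
    δ₁ = δ₂ := by
  have hn : δ₁.n = δ₂.n := by
    have h1 := card_chainSet δ₁
    have h2 := card_chainSet δ₂
    rw [h] at h1
    omega
  have hr : Set.range δ₁.D = ↑(chainSet δ₁) := by
    rw [chainSet]
    simp
  have hr2 : Set.range δ₂.D = ↑(chainSet δ₂) := by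
    rw [chainSet]
    simp
  obtain ⟨n₁, D₁, sm₁, f₁, p₁, nl₁⟩ := δ₁
  obtain ⟨n₂, D₂, sm₂, f₂, p₂, nl₂⟩ := δ₂
  dsimp at hn
  subst hn
  have hD : D₁ = D₂ := by
    have w : WellFoundedLT (Fin (n₁ + 1)) := inferInstance
    refine (@StrictMono.range_inj (Fin (n₁ + 1)) (Subgroup G) _ _ w D₁ D₂ sm₁ sm₂).mp ?_
    dsimp only at hr hr2 ⊢
    rw [hr, hr2, h]
  subst hD
  rfl

/-! ### The toggle operation -/

lemma Normal.mem_normalizer' {H : Subgroup G} (hn : H.Normal) (x : G) :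
    x ∈ (Subgroup.normalizer (H : Set G)) := by
  rw [Subgroup.mem_normalizer_iff]
  intro g
  constructor
  · exact fun hg => hn.conj_mem g hg x
  · intro hg
    have h2 := hn.conj_mem _ hg x⁻¹
    have e : x⁻¹ * (x * g * x⁻¹) * x⁻¹⁻¹ = g := by group
    rwa [e] at h2

variable (p) in
noncomputable def PofC (C : Finset (Subgroup G)) : Subgroup G :=
  pCore p G ⊔ greatestOf C

variable (p) in
noncomputable def YC (hZc : Z ≤ Subgroup.center G) (C : Finset (Subgroup G)) : Subgroup G :=
  Yof p Z hZc (PofC p C)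

variable (p) in
noncomputable def DmC (hZc : Z ≤ Subgroup.center G) (C : Finset (Subgroup G)) : Subgroup G :=
  greatestOf (C.filter fun D => ¬ YC p hZc C ≤ D)

variable (p) in
noncomputable def WC (hZc : Z ≤ Subgroup.center G) (C : Finset (Subgroup G)) : Subgroup G :=
  DmC p hZc C ⊔ YC p hZc C

variable (p) in
noncomputable def toggleC (hZc : Z ≤ Subgroup.center G) (C : Finset (Subgroup G)) :
    Finset (Subgroup G) :=
  if WC p hZc C ∈ C then C.erase (WC p hZc C) else insert (WC p hZc C) C

section ToggleFacts

variable (hp : p.Prime) (hZc : Z ≤ Subgroup.center G) (hlt : Z < pCore p G)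
variable {C : Finset (Subgroup G)} (h : GoodF p G Z C)
include hp hZc hlt h

lemma M_spec : greatestOf C ∈ C ∧ ∀ D ∈ C, D ≤ greatestOf C :=
  greatestOf_spec (exists_greatest ⟨Z, h.zmem⟩ h.total)

lemma PofC_isP : IsPGroup p (PofC p C) := by
  haveI := pCore_normal (G := G) hp
  exact IsPGroup.to_sup_of_normal_left (pCore_isPGroup hp) (h.pgrp _ (M_spec hp hZc hlt h).1)

lemma Y_not_le_Z : ¬ YC p hZc C ≤ Z := by
  obtain ⟨y, hy, hyZ⟩ := exists_Yof hp hZc hlt (le_sup_left : pCore p G ≤ PofC p C)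
    (PofC_isP hp hZc hlt h)
  exact fun hle => hyZ (hle hy)

lemma Dm_spec : DmC p hZc C ∈ C ∧ ¬ YC p hZc C ≤ DmC p hZc C ∧
    ∀ D ∈ C, ¬ YC p hZc C ≤ D → D ≤ DmC p hZc C := by
  have hne : (C.filter fun D => ¬ YC p hZc C ≤ D).Nonempty :=
    ⟨Z, Finset.mem_filter.mpr ⟨h.zmem, Y_not_le_Z hp hZc hlt h⟩⟩
  have htot : ∀ D ∈ C.filter fun D => ¬ YC p hZc C ≤ D,
      ∀ E ∈ C.filter fun D => ¬ YC p hZc C ≤ D, D ≤ E ∨ E ≤ D := by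
    intro D hD E hE
    exact h.total D (Finset.mem_filter.mp hD).1 E (Finset.mem_filter.mp hE).1
  have hs := greatestOf_spec (exists_greatest hne htot)
  have h1 := Finset.mem_filter.mp hs.1
  exact ⟨h1.1, h1.2, fun D hD hYD => hs.2 D (Finset.mem_filter.mpr ⟨hD, hYD⟩)⟩

lemma W_le_of {D : Subgroup G} (hD : D ∈ C) (hYD : YC p hZc C ≤ D) :
    WC p hZc C ≤ D := by
  have hDm := Dm_spec hp hZc hlt h
  have hcmp := h.total _ hDm.1 D hD
  rcases hcmp with h1 | h1
  · exact sup_le h1 hYD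
  · exact absurd (hYD.trans h1) hDm.2.1

lemma le_W_of {D : Subgroup G} (hD : D ∈ C) (hYD : ¬ YC p hZc C ≤ D) :
    D ≤ WC p hZc C :=
  ((Dm_spec hp hZc hlt h).2.2 D hD hYD).trans le_sup_left

lemma Z_le_W : Z ≤ WC p hZc C :=
  (h.zle _ (Dm_spec hp hZc hlt h).1).trans le_sup_left

lemma W_le_P : WC p hZc C ≤ PofC p C :=
  sup_le (((M_spec hp hZc hlt h).2 _ (Dm_spec hp hZc hlt h).1).trans le_sup_right)
    ((Yof_le_pCore hZc _).trans le_sup_left)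

lemma W_isP : IsPGroup p (WC p hZc C) :=
  IsPGroup.to_le (PofC_isP hp hZc hlt h) (W_le_P hp hZc hlt h)

lemma W_ne_Z : WC p hZc C ≠ Z := by
  intro e
  apply Y_not_le_Z hp hZc hlt h
  have hle : YC p hZc C ≤ WC p hZc C := le_sup_right
  rwa [e] at hle

lemma W_ne_Dm : WC p hZc C ≠ DmC p hZc C := by
  intro e
  apply (Dm_spec hp hZc hlt h).2.1
  have hle : YC p hZc C ≤ WC p hZc C := le_sup_right
  rwa [e] at hle

/-- Anybody normalizing all members of `C` normalizes `W`. -/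
lemma norm_all_imp_W {x : G} (hx : ∀ D ∈ C, x ∈ (Subgroup.normalizer (D : Set G))) :
    x ∈ (Subgroup.normalizer ((WC p hZc C) : Set G)) := by
  have hDm := Dm_spec hp hZc hlt h
  have hM := M_spec hp hZc hlt h
  have hP : x ∈ (Subgroup.normalizer ((PofC p C) : Set G)) :=
    mem_normalizer_sup (Normal.mem_normalizer' (pCore_normal hp) x) (hx _ hM.1)
  exact mem_normalizer_sup (hx _ hDm.1) (normalizer_le_Yof hp hZc hP)

lemma M_le_norm_W : greatestOf C ≤ (Subgroup.normalizer ((WC p hZc C) : Set G)) := by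
  intro x hx
  exact norm_all_imp_W hp hZc hlt h fun D hD => h.nlast D hD _ (M_spec hp hZc hlt h).1 (M_spec hp hZc hlt h).2 hx

lemma Y_le_norm_of_mem {D : Subgroup G} (hD : D ∈ C) :
    YC p hZc C ≤ (Subgroup.normalizer (D : Set G)) :=
  Yof_le_normalizer hZc (h.zle D hD) (((M_spec hp hZc hlt h).2 D hD).trans le_sup_right)

lemma Dm_eq_M (hnYM : ¬ YC p hZc C ≤ greatestOf C) : DmC p hZc C = greatestOf C := by
  apply greatestOf_eq_of (Finset.mem_filter.mpr ⟨(M_spec hp hZc hlt h).1, hnYM⟩)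
  intro D hD
  exact (M_spec hp hZc hlt h).2 D (Finset.mem_filter.mp hD).1

/-- `W ≤ N(D)` for every member of the chain. -/
lemma W_le_norm_of_mem {D : Subgroup G} (hD : D ∈ C) (hM : greatestOf C ≤ (Subgroup.normalizer (D : Set G))) :
    (DmC p hZc C ⊔ YC p hZc C) ≤ (Subgroup.normalizer (D : Set G)) :=
  sup_le (((M_spec hp hZc hlt h).2 _ (Dm_spec hp hZc hlt h).1).trans hM) (Y_le_norm_of_mem hp hZc hlt h hD)

lemma good_toggle : GoodF p G Z (toggleC p hZc C) := by
  have hM := M_spec hp hZc hlt h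
  have hDm := Dm_spec hp hZc hlt h
  rw [toggleC]
  split_ifs with hW
  · -- erase case
    constructor
    · exact Finset.mem_erase.mpr ⟨fun e => W_ne_Z hp hZc hlt h e.symm, h.zmem⟩
    · exact fun D hD => h.zle D (Finset.mem_of_mem_erase hD)
    · exact fun D hD E hE =>
        h.total D (Finset.mem_of_mem_erase hD) E (Finset.mem_of_mem_erase hE)
    · exact fun D hD => h.pgrp D (Finset.mem_of_mem_erase hD)
    · intro D hD E hE _
      have hDC := Finset.mem_of_mem_erase hD
      have hEC := Finset.mem_of_mem_erase hE
      exact (hM.2 E hEC).trans (h.nlast D hDC _ hM.1 hM.2)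
  · -- insert case
    constructor
    · exact Finset.mem_insert_of_mem h.zmem
    · intro D hD
      rcases Finset.mem_insert.mp hD with rfl | hD
      · exact Z_le_W hp hZc hlt h
      · exact h.zle D hD
    · intro D hD E hE
      rcases Finset.mem_insert.mp hD with rfl | hD <;>
        rcases Finset.mem_insert.mp hE with rfl | hE
      · exact Or.inl le_rfl
      · by_cases hY : YC p hZc C ≤ E
        · exact Or.inl (W_le_of hp hZc hlt h hE hY)
        · exact Or.inr (le_W_of hp hZc hlt h hE hY)
      · by_cases hY : YC p hZc C ≤ D
        · exact Or.inr (W_le_of hp hZc hlt h hD hY)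
        · exact Or.inl (le_W_of hp hZc hlt h hD hY)
      · exact h.total D hD E hE
    · intro D hD
      rcases Finset.mem_insert.mp hD with rfl | hD
      · exact W_isP hp hZc hlt h
      · exact h.pgrp D hD
    · intro D hD E hE hEmax
      have hME : greatestOf C ≤ E := hEmax _ (Finset.mem_insert_of_mem hM.1)
      have hWE : WC p hZc C ≤ E := hEmax _ (Finset.mem_insert_self _ _)
      rcases Finset.mem_insert.mp hD with rfl | hD
      · -- D = W
        rcases Finset.mem_insert.mp hE with rfl | hE
        · exact Subgroup.le_normalizer
        · exact (hM.2 E hE).trans (M_le_norm_W hp hZc hlt h)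
      · -- D ∈ C
        rcases Finset.mem_insert.mp hE with rfl | hE
        · -- E = W
          by_cases hYM : YC p hZc C ≤ greatestOf C
          · have hWM : WC p hZc C = greatestOf C :=
              le_antisymm (W_le_of hp hZc hlt h hM.1 hYM) hME
            rw [hWM]
            exact h.nlast D hD _ hM.1 hM.2
          · show DmC p hZc C ⊔ YC p hZc C ≤ (Subgroup.normalizer (D : Set G))
            exact W_le_norm_of_mem hp hZc hlt h hD (h.nlast D hD _ hM.1 hM.2)
        · exact (hM.2 E hE).trans (h.nlast D hD _ hM.1 hM.2)

lemma P_sup_W_eq : pCore p G ⊔ (DmC p hZc C ⊔ YC p hZc C) = pCore p G ⊔ DmC p hZc C := by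
  apply le_antisymm
  · exact sup_le le_sup_left (sup_le le_sup_right
      ((Yof_le_pCore hZc _).trans le_sup_left))
  · exact sup_le le_sup_left ((le_sup_left : DmC p hZc C ≤ _).trans le_sup_right)

lemma P_toggle : PofC p (toggleC p hZc C) = PofC p C := by
  have hM := M_spec hp hZc hlt h
  have hDm := Dm_spec hp hZc hlt h
  rw [toggleC]
  split_ifs with hW
  · -- erase
    by_cases hWM : WC p hZc C = greatestOf C
    · have hg : greatestOf (C.erase (WC p hZc C)) = DmC p hZc C := by
        apply greatestOf_eq_of
        · exact Finset.mem_erase.mpr ⟨fun e => W_ne_Dm hp hZc hlt h e.symm, hDm.1⟩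
        · intro D hD
          have hDC := Finset.mem_of_mem_erase hD
          have hDW := (Finset.mem_erase.mp hD).1
          by_cases hY : YC p hZc C ≤ D
          · exfalso
            apply hDW
            exact le_antisymm (hWM ▸ hM.2 D hDC) (W_le_of hp hZc hlt h hDC hY)
          · exact hDm.2.2 D hDC hY
      rw [PofC, hg, PofC, ← hWM]
      show pCore p G ⊔ DmC p hZc C = pCore p G ⊔ (DmC p hZc C ⊔ YC p hZc C)
      exact (P_sup_W_eq hp hZc hlt h).symm
    · have hg : greatestOf (C.erase (WC p hZc C)) = greatestOf C := by
        apply greatestOf_eq_of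
        · exact Finset.mem_erase.mpr ⟨fun e => hWM e.symm, hM.1⟩
        · exact fun D hD => hM.2 D (Finset.mem_of_mem_erase hD)
      rw [PofC, hg, PofC]
  · -- insert
    by_cases hYM : YC p hZc C ≤ greatestOf C
    · have hg : greatestOf (insert (WC p hZc C) C) = greatestOf C := by
        apply greatestOf_eq_of
        · exact Finset.mem_insert_of_mem hM.1
        · intro D hD
          rcases Finset.mem_insert.mp hD with rfl | hD
          · exact W_le_of hp hZc hlt h hM.1 hYM
          · exact hM.2 D hD
      rw [PofC, hg, PofC]
    · have hDmM : DmC p hZc C = greatestOf C := Dm_eq_M hp hZc hlt h hYM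
      have hg : greatestOf (insert (WC p hZc C) C) = WC p hZc C := by
        apply greatestOf_eq_of
        · exact Finset.mem_insert_self _ _
        · intro D hD
          rcases Finset.mem_insert.mp hD with rfl | hD
          · exact le_rfl
          · exact (hM.2 D hD).trans (hDmM ▸ (le_sup_left : DmC p hZc C ≤ WC p hZc C))
      rw [PofC, hg, PofC, ← hDmM]
      show pCore p G ⊔ (DmC p hZc C ⊔ YC p hZc C) = pCore p G ⊔ DmC p hZc C
      exact P_sup_W_eq hp hZc hlt h

lemma Y_toggle : YC p hZc (toggleC p hZc C) = YC p hZc C := by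
  rw [YC, YC, P_toggle hp hZc hlt h]

lemma Dm_toggle : DmC p hZc (toggleC p hZc C) = DmC p hZc C := by
  rw [DmC, DmC]
  simp only [Y_toggle hp hZc hlt h]
  have hYW : YC p hZc C ≤ WC p hZc C := le_sup_right
  rw [toggleC]
  split_ifs with hW
  · rw [Finset.filter_erase, Finset.erase_eq_of_notMem]
    intro hmem
    exact (Finset.mem_filter.mp hmem).2 hYW
  · rw [Finset.filter_insert, if_neg]
    simp only [not_not]
    exact hYW

lemma W_toggle : WC p hZc (toggleC p hZc C) = WC p hZc C := by
  rw [WC, WC, Dm_toggle hp hZc hlt h, Y_toggle hp hZc hlt h]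

lemma toggle_toggle : toggleC p hZc (toggleC p hZc C) = C := by
  conv_lhs => rw [toggleC]
  rw [W_toggle hp hZc hlt h]
  by_cases hW : WC p hZc C ∈ C
  · have h1 : toggleC p hZc C = C.erase (WC p hZc C) := by rw [toggleC, if_pos hW]
    rw [h1, if_neg (Finset.notMem_erase _ _), Finset.insert_erase hW]
  · have h1 : toggleC p hZc C = insert (WC p hZc C) C := by rw [toggleC, if_neg hW]
    rw [h1, if_pos (Finset.mem_insert_self _ _), Finset.erase_insert hW]

lemma card_toggle : (toggleC p hZc C).card = C.card + 1 ∨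
    ((toggleC p hZc C).card + 1 = C.card ∧ 2 ≤ C.card) := by
  rw [toggleC]
  split_ifs with hW
  · right
    constructor
    · rw [Finset.card_erase_of_mem hW]
      have : 0 < C.card := Finset.card_pos.mpr ⟨_, hW⟩
      omega
    · have h2 : ({Z, WC p hZc C} : Finset (Subgroup G)) ⊆ C := by
        intro x hx
        rcases Finset.mem_insert.mp hx with rfl | hx
        · exact h.zmem
        · rwa [Finset.mem_singleton.mp hx]
      have h3 : ({Z, WC p hZc C} : Finset (Subgroup G)).card = 2 := by
        rw [Finset.card_insert_of_notMem, Finset.card_singleton]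
        simp only [Finset.mem_singleton]
        exact fun e => W_ne_Z hp hZc hlt h e.symm
      calc 2 = ({Z, WC p hZc C} : Finset (Subgroup G)).card := h3.symm
        _ ≤ C.card := Finset.card_le_card h2
  · left
    rw [Finset.card_insert_of_notMem hW]

lemma stab_toggle (x : G) :
    (∀ D ∈ toggleC p hZc C, x ∈ (Subgroup.normalizer (D : Set G))) ↔ (∀ D ∈ C, x ∈ (Subgroup.normalizer (D : Set G))) := by
  rw [toggleC]
  split_ifs with hW
  · constructor
    · intro hx D hD
      by_cases hDW : D = WC p hZc C
      · subst hDW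
        -- W = Dm ⊔ Y, normalize via erase-members
        have hDm := Dm_spec hp hZc hlt h
        have hM := M_spec hp hZc hlt h
        have hxDm : x ∈ (Subgroup.normalizer ((DmC p hZc C) : Set G)) := by
          apply hx
          exact Finset.mem_erase.mpr ⟨fun e => W_ne_Dm hp hZc hlt h e.symm, hDm.1⟩
        have hxP : x ∈ (Subgroup.normalizer ((PofC p C) : Set G)) := by
          by_cases hWM : WC p hZc C = greatestOf C
          · have e : PofC p C = pCore p G ⊔ DmC p hZc C := by
              rw [PofC, ← hWM]
              exact P_sup_W_eq hp hZc hlt h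
            rw [e]
            exact mem_normalizer_sup (Normal.mem_normalizer' (pCore_normal hp) x) hxDm
          · have hxM : x ∈ (Subgroup.normalizer ((greatestOf C) : Set G)) := by
              apply hx
              exact Finset.mem_erase.mpr ⟨fun e => hWM e.symm, hM.1⟩
            exact mem_normalizer_sup (Normal.mem_normalizer' (pCore_normal hp) x) hxM
        exact mem_normalizer_sup hxDm (normalizer_le_Yof hp hZc hxP)
      · exact hx D (Finset.mem_erase.mpr ⟨hDW, hD⟩)
    · intro hx D hD
      exact hx D (Finset.mem_of_mem_erase hD)
  · constructor
    · intro hx D hD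
      exact hx D (Finset.mem_insert_of_mem hD)
    · intro hx D hD
      rcases Finset.mem_insert.mp hD with rfl | hD
      · exact norm_all_imp_W hp hZc hlt h hx
      · exact hx D hD

end ToggleFacts

section Equivariance

variable (hp : p.Prime) (hZc : Z ≤ Subgroup.center G) (hlt : Z < pCore p G)
variable {C : Finset (Subgroup G)} (h : GoodF p G Z C)
variable (σ : MulAut G) (hσ : Z.map σ.toMonoidHom = Z)
include hp hZc hlt h hσ

lemma good_image : GoodF p G Z (C.image (Subgroup.map σ.toMonoidHom)) := by
  constructor
  · exact Finset.mem_image.mpr ⟨Z, h.zmem, hσ⟩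
  · rintro D' hD'
    obtain ⟨D, hD, rfl⟩ := Finset.mem_image.mp hD'
    rw [← hσ]
    exact Subgroup.map_mono (h.zle D hD)
  · rintro D' hD' E' hE'
    obtain ⟨D, hD, rfl⟩ := Finset.mem_image.mp hD'
    obtain ⟨E, hE, rfl⟩ := Finset.mem_image.mp hE'
    rcases h.total D hD E hE with h1 | h1
    · exact Or.inl (Subgroup.map_mono h1)
    · exact Or.inr (Subgroup.map_mono h1)
  · rintro D' hD'
    obtain ⟨D, hD, rfl⟩ := Finset.mem_image.mp hD'
    exact (h.pgrp D hD).map _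
  · rintro D' hD' E' hE' hmax
    obtain ⟨D, hD, rfl⟩ := Finset.mem_image.mp hD'
    obtain ⟨E, hE, rfl⟩ := Finset.mem_image.mp hE'
    have hmax' : ∀ F ∈ C, F ≤ E := by
      intro F hF
      have := hmax _ (Finset.mem_image_of_mem _ hF)
      exact (Subgroup.map_le_map_iff_of_injective σ.injective).mp this
    have := h.nlast D hD E hE hmax'
    calc E.map σ.toMonoidHom ≤ (Subgroup.normalizer (D : Set G)).map σ.toMonoidHom := Subgroup.map_mono this
      _ = (Subgroup.normalizer ((D.map σ.toMonoidHom) : Set G)) := Subgroup.map_equiv_normalizer_eq D σ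

lemma greatest_image :
    greatestOf (C.image (Subgroup.map σ.toMonoidHom)) =
      (greatestOf C).map σ.toMonoidHom := by
  have hM := M_spec hp hZc hlt h
  apply greatestOf_eq_of (Finset.mem_image_of_mem _ hM.1)
  rintro D' hD'
  obtain ⟨D, hD, rfl⟩ := Finset.mem_image.mp hD'
  exact Subgroup.map_mono (hM.2 D hD)

lemma P_image : PofC p (C.image (Subgroup.map σ.toMonoidHom)) =
    (PofC p C).map σ.toMonoidHom := by
  rw [PofC, PofC, greatest_image hp hZc hlt h σ hσ, Subgroup.map_sup, pCore_map hp σ]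

lemma Y_image : YC p hZc (C.image (Subgroup.map σ.toMonoidHom)) =
    (YC p hZc C).map σ.toMonoidHom := by
  rw [YC, YC, P_image hp hZc hlt h σ hσ, Yof_map hp hZc σ hσ]

lemma Dm_image : DmC p hZc (C.image (Subgroup.map σ.toMonoidHom)) =
    (DmC p hZc C).map σ.toMonoidHom := by
  have hDm := Dm_spec hp hZc hlt h
  rw [DmC]
  simp only [Y_image hp hZc hlt h σ hσ]
  apply greatestOf_eq_of
  · refine Finset.mem_filter.mpr ⟨Finset.mem_image_of_mem _ hDm.1, ?_⟩
    intro hle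
    exact hDm.2.1 ((Subgroup.map_le_map_iff_of_injective σ.injective).mp hle)
  · rintro D' hD'
    have hD1 := (Finset.mem_filter.mp hD').1
    have hD2 := (Finset.mem_filter.mp hD').2
    obtain ⟨D, hD, rfl⟩ := Finset.mem_image.mp hD1
    have : ¬ YC p hZc C ≤ D := by
      intro hle
      exact hD2 (Subgroup.map_mono hle)
    exact Subgroup.map_mono (hDm.2.2 D hD this)

lemma W_image : WC p hZc (C.image (Subgroup.map σ.toMonoidHom)) =
    (WC p hZc C).map σ.toMonoidHom := by
  rw [WC, WC, Dm_image hp hZc hlt h σ hσ, Y_image hp hZc hlt h σ hσ, Subgroup.map_sup]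

lemma toggle_image : toggleC p hZc (C.image (Subgroup.map σ.toMonoidHom)) =
    (toggleC p hZc C).image (Subgroup.map σ.toMonoidHom) := by
  rw [toggleC, toggleC, W_image hp hZc hlt h σ hσ]
  by_cases hW : WC p hZc C ∈ C
  · rw [if_pos (Finset.mem_image_of_mem _ hW), if_pos hW,
      Finset.image_erase (Subgroup.map_injective σ.injective)]
  · rw [if_neg, if_neg hW, Finset.image_insert]
    intro hmem
    obtain ⟨D, hD, hDe⟩ := Finset.mem_image.mp hmem
    exact hW ((Subgroup.map_injective σ.injective hDe) ▸ hD)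

end Equivariance

lemma chainSet_mapChain {δ : NormalPChain p G Z} (σ : MulAut G)
    (hσ : Z.map σ.toMonoidHom = Z) :
    chainSet (mapChain σ hσ δ) = (chainSet δ).image (Subgroup.map σ.toMonoidHom) := by
  rw [chainSet, chainSet, Finset.image_image]
  rfl

lemma mem_stab_iff {δ : NormalPChain p G Z} {x : G} :
    x ∈ stabChain δ ↔ ∀ D ∈ chainSet δ, x ∈ (Subgroup.normalizer (D : Set G)) := by
  rw [stabChain, Subgroup.mem_iInf]
  constructor
  · intro hx D hD
    obtain ⟨i, rfl⟩ := mem_chainSet.mp hD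
    exact hx i
  · intro hx i
    exact hx _ (mem_chainSet.mpr ⟨i, rfl⟩)

end Aux


/-- if `Z ≤ Z(G)` is a `p`-subgroup with `Z < O_p(G)`, there is a
self-inverse bijection `*` on the normal `p`-chains starting at `Z`, changing the
length by exactly one, preserving stabilizers, and commuting with the action of
every automorphism of `G` fixing `Z` (in particular with `G`-conjugation). -/
theorem chain_pairing {G : Type} [Group G] [Fintype G]
    (p : ℕ) (hp : p.Prime) (Z : Subgroup G)
    (hZ : Z ≤ Subgroup.center G) (hZp : IsPGroup p Z)
    (hlt : Z < pCore p G) :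
    ∃ f : NormalPChain p G Z → NormalPChain p G Z,
      (∀ δ, f (f δ) = δ) ∧
      (∀ δ, (f δ).n = δ.n + 1 ∨ (f δ).n + 1 = δ.n) ∧
      (∀ δ, stabChain (f δ) = stabChain δ) ∧
      (∀ (σ : MulAut G) (hσ : Z.map σ.toMonoidHom = Z) (δ),
        f (mapChain σ hσ δ) = mapChain σ hσ (f δ)) := by
  classical
  have hZc := hZ
  set f : NormalPChain p G Z → NormalPChain p G Z :=
    fun δ => toChain p Z (toggleC p hZc (chainSet δ))
      (good_toggle hp hZc hlt (good_chainSet δ)) with hf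
  have hCS : ∀ δ, chainSet (f δ) = toggleC p hZc (chainSet δ) := by
    intro δ
    rw [hf]
    exact chainSet_toChain (good_toggle hp hZc hlt (good_chainSet δ))
  refine ⟨f, ?_, ?_, ?_, ?_⟩
  · intro δ
    apply chain_ext
    rw [hCS, hCS]
    exact toggle_toggle hp hZc hlt (good_chainSet δ)
  · intro δ
    have h1 := card_chainSet (f δ)
    have h2 := card_chainSet δ
    rw [hCS] at h1
    rcases card_toggle hp hZc hlt (good_chainSet δ) with h3 | h3
    · left; omega
    · right; omega
  · intro δ
    ext x
    rw [mem_stab_iff, mem_stab_iff, hCS]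
    exact stab_toggle hp hZc hlt (good_chainSet δ) x
  · intro σ hσ δ
    apply chain_ext
    rw [hCS, chainSet_mapChain σ hσ, chainSet_mapChain σ hσ,
      toggle_image hp hZc hlt (good_chainSet δ) σ hσ, hCS]

end CTC
end

section
/- Let N ⊴ G be finite groups and ψ_0 ∈ Irr(H_0) with H_0 ≤ H ≤ G, such that ψ := ψ_0^H is irreducible. Then for any x ∈ C_H(M) where M ⊴ H with H = H_0 M, setting J = ⟨M, x⟩ and J_0 = J ∩ H_0: if every irreducible character of J lying over a fixed irreducible character of M is induced from J_0, then x ∈ J_0. -/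
open scoped BigOperators Classical

namespace CTC

noncomputable def Res {G : Type} [Group G] {H K : Subgroup G} (hKH : K ≤ H)
    (χ : ↥H → ℂ) : ↥K → ℂ := fun k => χ ⟨k.1, hKH k.2⟩

/-- The character of `H` induced from a character `φ` of a subgroup `K ≤ H`. -/
noncomputable def IndRel {G : Type} [Group G] [Fintype G] (H K : Subgroup G)
    (φ : ↥K → ℂ) : ↥H → ℂ := fun g =>
  (Fintype.card ↥K : ℂ)⁻¹ *
    ∑ x : ↥H, if h : (x : G) * (g : G) * (x : G)⁻¹ ∈ K then
      φ ⟨(x : G) * (g : G) * (x : G)⁻¹, h⟩ else 0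

section Machinery
set_option linter.unusedSectionVars false
open LinearMap Module TensorProduct
noncomputable section

section MatrixStar
open Matrix



lemma matrix_trace_inv_eq_star {K : Type} [Group K] [Fintype K] {n : ℕ}
    (R : K →* Matrix (Fin n) (Fin n) ℂ) (g : K) :
    (R g⁻¹).trace = star (R g).trace := by
  classical
  set B : Matrix (Fin n) (Fin n) ℂ := ∑ h : K, (R h)ᴴ * R h with hB
  have hInv : ∀ g : K, (R g)ᴴ * B * R g = B := by
    intro g
    have : (R g)ᴴ * B * R g = ∑ h : K, (R (h * g))ᴴ * R (h * g) := by
      rw [hB, Finset.mul_sum, Finset.sum_mul]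
      refine Finset.sum_congr rfl fun h _ => ?_
      rw [_root_.map_mul, Matrix.conjTranspose_mul]
      simp only [Matrix.mul_assoc]
    rw [this, hB]
    exact Fintype.sum_equiv (Equiv.mulRight g) _ _ fun h => rfl
  have hdet : IsUnit B.det := by
    rw [isUnit_iff_ne_zero]
    intro hd
    obtain ⟨v, hv, hBv⟩ := Matrix.exists_mulVec_eq_zero_iff.mpr hd
    have hquad : (0 : ℂ) = ∑ h : K, dotProduct (star (R h *ᵥ v)) (R h *ᵥ v) := by
      have : dotProduct (star v) (B *ᵥ v) = 0 := by rw [hBv]; simp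
      rw [← this, hB]
      have hsum : (∑ h : K, (R h)ᴴ * R h) *ᵥ v = ∑ h : K, ((R h)ᴴ * R h) *ᵥ v :=
        map_sum (Matrix.mulVec.addMonoidHomLeft v) _ _
      have hdp : ∀ (w : K → Fin n → ℂ), star v ⬝ᵥ (∑ h : K, w h) = ∑ h : K, star v ⬝ᵥ w h := by
        intro w
        simp only [dotProduct, Finset.sum_apply, Finset.mul_sum]
        rw [Finset.sum_comm]
      rw [hsum, hdp]
      refine Finset.sum_congr rfl fun h _ => ?_
      rw [← Matrix.mulVec_mulVec, Matrix.star_mulVec, Matrix.dotProduct_mulVec]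
    have hterm : ∀ h : K, dotProduct (star (R h *ᵥ v)) (R h *ᵥ v)
        = ((∑ i, Complex.normSq ((R h *ᵥ v) i) : ℝ) : ℂ) := by
      intro h
      rw [dotProduct]
      push_cast
      refine Finset.sum_congr rfl fun i _ => ?_
      simp [Pi.star_apply, Complex.normSq_eq_conj_mul_self]
    have hre : (0:ℝ) = ∑ h : K, ∑ i, Complex.normSq ((R h *ᵥ v) i) := by
      have := hquad
      simp only [hterm] at this
      rw [← Complex.ofReal_sum] at this
      exact_mod_cast this
    have hall : ∀ h : K, ∀ i, Complex.normSq ((R h *ᵥ v) i) = 0 := by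
      intro h i
      have h1 : ∀ h ∈ (Finset.univ : Finset K), (0:ℝ) ≤ ∑ i, Complex.normSq ((R h *ᵥ v) i) :=
        fun h _ => Finset.sum_nonneg fun i _ => Complex.normSq_nonneg _
      have h2 := (Finset.sum_eq_zero_iff_of_nonneg h1).mp hre.symm h (Finset.mem_univ h)
      have h3 : ∀ i ∈ (Finset.univ : Finset (Fin n)), (0:ℝ) ≤ Complex.normSq ((R h *ᵥ v) i) :=
        fun i _ => Complex.normSq_nonneg _
      exact (Finset.sum_eq_zero_iff_of_nonneg h3).mp h2 i (Finset.mem_univ i)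
    apply hv
    funext i
    have := hall 1 i
    rw [_root_.map_one, Matrix.one_mulVec] at this
    show v i = 0
    exact Complex.normSq_eq_zero.mp this
  have hRinv : ∀ g : K, R g * R g⁻¹ = 1 := fun g => by rw [← _root_.map_mul, mul_inv_cancel, _root_.map_one]
  have key : B * R g⁻¹ = (R g)ᴴ * B := by
    calc B * R g⁻¹ = ((R g)ᴴ * B * R g) * R g⁻¹ := by rw [hInv]
    _ = (R g)ᴴ * B * (R g * R g⁻¹) := by rw [Matrix.mul_assoc ((R g)ᴴ * B)]
    _ = (R g)ᴴ * B := by rw [hRinv, Matrix.mul_one]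
  have : R g⁻¹ = B⁻¹ * ((R g)ᴴ * B) := by
    rw [← key, ← Matrix.mul_assoc, Matrix.nonsing_inv_mul B hdet, Matrix.one_mul]
  rw [this, Matrix.trace_mul_comm, Matrix.mul_assoc, Matrix.mul_nonsing_inv B hdet,
    Matrix.mul_one, Matrix.trace_conjTranspose]

end MatrixStar

lemma rep_trace_inv_eq_star {K : Type} [Group K] [Fintype K] {V : Type}
    [AddCommGroup V] [Module ℂ V] [FiniteDimensional ℂ V]
    (ρ : Representation ℂ K V) (g : K) :
    trace ℂ V (ρ g⁻¹) = star (trace ℂ V (ρ g)) := by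
  classical
  let b := Module.finBasis ℂ V
  let R : K →* Matrix (Fin (finrank ℂ V)) (Fin (finrank ℂ V)) ℂ :=
    (LinearMap.toMatrixAlgEquiv b : (V →ₗ[ℂ] V) ≃ₐ[ℂ] _).toMulEquiv.toMonoidHom.comp ρ
  have hR : ∀ h : K, toMatrix b b (ρ h) = R h := fun h => rfl
  rw [trace_eq_matrix_trace ℂ b, trace_eq_matrix_trace ℂ b, hR, hR]
  exact matrix_trace_inv_eq_star R g



/-- The representation of `K` on a `MonoidAlgebra ℂ K`-module. -/
def modRep (K : Type) [Group K] (V : Type) [AddCommGroup V] [Module ℂ V]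
    [Module (MonoidAlgebra ℂ K) V] [IsScalarTower ℂ (MonoidAlgebra ℂ K) V] :
    Representation ℂ K V where
  toFun g := MonoidAlgebra.GroupSMul.linearMap ℂ V g
  map_one' := by
    ext v
    simp [MonoidAlgebra.GroupSMul.linearMap_apply, ← MonoidAlgebra.one_def]
  map_mul' g h := by
    ext v
    simp only [MonoidAlgebra.GroupSMul.linearMap_apply, Module.End.mul_apply]
    rw [← mul_smul, MonoidAlgebra.single_mul_single, mul_one]

lemma modRep_apply {K : Type} [Group K] {V : Type} [AddCommGroup V] [Module ℂ V]
    [Module (MonoidAlgebra ℂ K) V] [IsScalarTower ℂ (MonoidAlgebra ℂ K) V] (g : K) (v : V) :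
    modRep K V g v = MonoidAlgebra.single g (1:ℂ) • v := rfl

/-- The character of a `MonoidAlgebra ℂ K`-module. -/
def mchar (K : Type) [Group K] (V : Type) [AddCommGroup V] [Module ℂ V]
    [Module (MonoidAlgebra ℂ K) V] [IsScalarTower ℂ (MonoidAlgebra ℂ K) V] (g : K) : ℂ :=
  trace ℂ V (modRep K V g)

lemma mchar_equiv {K : Type} [Group K] {V W : Type} [AddCommGroup V] [Module ℂ V]
    [Module (MonoidAlgebra ℂ K) V] [IsScalarTower ℂ (MonoidAlgebra ℂ K) V]
    [AddCommGroup W] [Module ℂ W] [Module (MonoidAlgebra ℂ K) W]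
    [IsScalarTower ℂ (MonoidAlgebra ℂ K) W]
    (e : V ≃ₗ[MonoidAlgebra ℂ K] W) : mchar K W = mchar K V := by
  funext g
  have h : modRep K W g = (e.restrictScalars ℂ).conj (modRep K V g) := by
    ext w
    simp only [LinearEquiv.conj_apply, LinearMap.coe_comp, Function.comp_apply,
      LinearEquiv.coe_coe, LinearEquiv.restrictScalars_apply, modRep_apply]
    rw [map_smul]
    congr 1
    exact (e.apply_symm_apply w).symm ▸ rfl
  rw [mchar, h, trace_conj']
  rfl

lemma mchar_prod {K : Type} [Group K] (V W : Type) [AddCommGroup V] [Module ℂ V]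
    [Module (MonoidAlgebra ℂ K) V] [IsScalarTower ℂ (MonoidAlgebra ℂ K) V]
    [AddCommGroup W] [Module ℂ W] [Module (MonoidAlgebra ℂ K) W]
    [IsScalarTower ℂ (MonoidAlgebra ℂ K) W]
    [FiniteDimensional ℂ V] [FiniteDimensional ℂ W] :
    mchar K (V × W) = fun g => mchar K V g + mchar K W g := by
  funext g
  have h : modRep K (V × W) g = (modRep K V g).prodMap (modRep K W g) := by
    ext v <;> rfl
  rw [mchar, h, trace_prodMap']
  rfl

section Aux
variable {K : Type} [Group K] [Fintype K]

local notation "𝔸" => MonoidAlgebra ℂ K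

-- Decomposition induction: if F kills all simple characters, it kills all characters.
lemma aux_decomp (F : (K → ℂ) → ℂ)
    (hFadd : ∀ a b : K → ℂ, F (fun g => a g + b g) = F a + F b)
    (hF0 : F (fun _ => 0) = 0)
    (hsimple : ∀ (W : Type) [AddCommGroup W] [Module ℂ W] [Module 𝔸 W]
      [IsScalarTower ℂ 𝔸 W] [FiniteDimensional ℂ W],
      IsSimpleModule 𝔸 W → F (mchar K W) = 0) :
    ∀ (n : ℕ) (V : Type) [AddCommGroup V] [Module ℂ V] [Module 𝔸 V]
      [IsScalarTower ℂ 𝔸 V] [FiniteDimensional ℂ V],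
      finrank ℂ V ≤ n → F (mchar K V) = 0 := by
  haveI : NeZero ((Fintype.card K : ℂ)) :=
    ⟨Nat.cast_ne_zero.mpr Fintype.card_ne_zero⟩
  intro n
  induction n with
  | zero =>
    intro V _ _ _ _ _ hr
    haveI : Subsingleton V := by
      have : finrank ℂ V = 0 := Nat.le_zero.mp hr
      exact (Module.finrank_zero_iff (R := ℂ) (M := V)).mp this
    have hm : mchar K V = fun _ => 0 := by
      funext g
      rw [mchar, Subsingleton.elim (modRep K V g) 0, map_zero]
    rw [hm]; exact hF0
  | succ n ih =>
    intro V _ _ _ _ _ hr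
    by_cases hs : IsSimpleModule 𝔸 V
    · exact hsimple V hs
    by_cases htr : Subsingleton V
    · have hm : mchar K V = fun _ => 0 := by
        funext g
        rw [mchar, Subsingleton.elim (modRep K V g) 0, map_zero]
      rw [hm]; exact hF0
    haveI : Nontrivial V := not_subsingleton_iff_nontrivial.mp htr
    -- find a proper nontrivial submodule
    have hex : ∃ p : Submodule 𝔸 V, p ≠ ⊥ ∧ p ≠ ⊤ := by
      by_contra hno
      push_neg at hno
      exact hs { toIsSimpleOrder := ⟨fun p => or_iff_not_imp_left.mpr (hno p)⟩ }
    obtain ⟨p, hpbot, hptop⟩ := hex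
    obtain ⟨q, hpq⟩ := MonoidAlgebra.Submodule.exists_isCompl p
    have e : (↥p × ↥q) ≃ₗ[𝔸] V := Submodule.prodEquivOfIsCompl p q hpq
    haveI : FiniteDimensional ℂ ↥p :=
      FiniteDimensional.of_injective ((p.subtype.restrictScalars ℂ)) Subtype.coe_injective
    haveI : FiniteDimensional ℂ ↥q :=
      FiniteDimensional.of_injective ((q.subtype.restrictScalars ℂ)) Subtype.coe_injective
    have hsum : finrank ℂ ↥p + finrank ℂ ↥q = finrank ℂ V := by
      rw [← Module.finrank_prod]
      exact (e.restrictScalars ℂ).finrank_eq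
    haveI hqnt : Nontrivial ↥q := Submodule.nontrivial_iff_ne_bot.mpr (by
      intro hq
      apply hptop
      have h2 := hpq.sup_eq_top
      rwa [hq, sup_bot_eq] at h2)
    haveI hpnt : Nontrivial ↥p := Submodule.nontrivial_iff_ne_bot.mpr hpbot
    have hppos : 0 < finrank ℂ ↥p := finrank_pos
    have hqpos : 0 < finrank ℂ ↥q := finrank_pos
    have hple : finrank ℂ ↥p ≤ n := by omega
    have hqle : finrank ℂ ↥q ≤ n := by omega
    have : mchar K V = mchar K (↥p × ↥q) := mchar_equiv e
    rw [this, mchar_prod, hFadd]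
    rw [ih ↥p hple, ih ↥q hqle, add_zero]
end Aux

section Simple
variable {K : Type} [Group K] [Fintype K]
variable (W : Type) [AddCommGroup W] [Module ℂ W] [Module (MonoidAlgebra ℂ K) W]
  [IsScalarTower ℂ (MonoidAlgebra ℂ K) W] [FiniteDimensional ℂ W]

lemma schur_scalar (hsimp : IsSimpleModule (MonoidAlgebra ℂ K) W) (T : W →ₗ[ℂ] W)
    (hT : ∀ (g : K) (v : W),
      T (MonoidAlgebra.single g (1:ℂ) • v) = MonoidAlgebra.single g (1:ℂ) • T v) :
    ∃ c : ℂ, T = c • LinearMap.id := by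
  haveI := hsimp.nontrivial
  obtain ⟨c, hc⟩ := Module.End.exists_eigenvalue (T : Module.End ℂ W)
  obtain ⟨v, hv⟩ := hc.exists_hasEigenvector
  refine ⟨c, ?_⟩
  set S : W →ₗ[ℂ] W := T - c • LinearMap.id with hS
  have hScomm : ∀ (g : K) (v : W),
      S (MonoidAlgebra.single g (1:ℂ) • v) = MonoidAlgebra.single g (1:ℂ) • S v := by
    intro g w
    simp only [hS, LinearMap.sub_apply, LinearMap.smul_apply, LinearMap.id_apply, hT, smul_sub]
    congr 1
    rw [smul_comm]
  set S' : W →ₗ[MonoidAlgebra ℂ K] W := MonoidAlgebra.equivariantOfLinearOfComm S hScomm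
  have hS'v : S' v = 0 := by
    show S v = 0
    simp [hS, hv.apply_eq_smul]
  have : S' = 0 := by
    rcases LinearMap.injective_or_eq_zero S' with hinj | h0
    · exact absurd (hinj (by rw [hS'v, map_zero])) hv.2
    · exact h0
  have hS0 : S = 0 := by
    ext w
    exact congrFun (congrArg DFunLike.coe this) w
  rw [← sub_eq_zero]
  exact hS0

lemma central_mchar_ne_zero (hsimp : IsSimpleModule (MonoidAlgebra ℂ K) W)
    (z : K) (hz : ∀ g : K, g * z = z * g) : mchar K W z ≠ 0 := by
  haveI := hsimp.nontrivial
  set T : W →ₗ[ℂ] W := modRep K W z with hTdef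
  have hT : ∀ (g : K) (v : W),
      T (MonoidAlgebra.single g (1:ℂ) • v) = MonoidAlgebra.single g (1:ℂ) • T v := by
    intro g v
    rw [hTdef, modRep_apply, modRep_apply, ← mul_smul, ← mul_smul,
      MonoidAlgebra.single_mul_single, MonoidAlgebra.single_mul_single, one_mul, hz g]
  obtain ⟨c, hc⟩ := schur_scalar W hsimp T hT
  have hc0 : c ≠ 0 := by
    intro h0
    obtain ⟨v, hv⟩ := exists_ne (0 : W)
    have h1 : T v = 0 := by rw [hc, h0]; simp
    have h2 : MonoidAlgebra.single z⁻¹ (1:ℂ) • T v = v := by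
      rw [hTdef, modRep_apply, ← mul_smul, MonoidAlgebra.single_mul_single,
        one_mul, inv_mul_cancel, ← MonoidAlgebra.one_def, one_smul]
    rw [h1, smul_zero] at h2
    exact hv h2.symm
  have : mchar K W z = c * (finrank ℂ W : ℂ) := by
    rw [mchar, ← hTdef, hc]
    simp
  rw [this]
  exact mul_ne_zero hc0 (Nat.cast_ne_zero.mpr finrank_pos.ne')

lemma mchar_isChar : CTC.IsChar K (mchar K W) := by
  classical
  set n := finrank ℂ W
  set e : W ≃ₗ[ℂ] (Fin n → ℂ) := (Module.finBasis ℂ W).equivFun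
  refine ⟨n, {
    toFun := fun g => e.conj (modRep K W g)
    map_one' := by
      show e.conj ((modRep K W) 1) = 1
      rw [_root_.map_one, Module.End.one_eq_id, e.conj_id, ← Module.End.one_eq_id]
    map_mul' := fun g h => by
      show e.conj ((modRep K W) (g * h)) = _
      rw [_root_.map_mul, Module.End.mul_eq_comp, e.conj_comp, ← Module.End.mul_eq_comp]
      }, fun g => ?_⟩
  show mchar K W g = trace ℂ (Fin n → ℂ) (e.conj (modRep K W g))
  rw [LinearMap.trace_conj']
  rfl

lemma mchar_selfInner (hsimp : IsSimpleModule (MonoidAlgebra ℂ K) W) :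
    CTC.cfInner K (mchar K W) (mchar K W) = 1 := by
  classical
  haveI := hsimp.nontrivial
  have hcard : (Fintype.card K : ℂ) ≠ 0 := Nat.cast_ne_zero.mpr Fintype.card_ne_zero
  haveI : Invertible (Fintype.card K : ℂ) := invertibleOfNonzero hcard
  set ρ := modRep K W with hρ
  set L := Representation.linHom ρ ρ with hL
  -- invariants of linHom = ℂ ∙ id
  have hinv_eq : L.invariants = Submodule.span ℂ {(LinearMap.id : W →ₗ[ℂ] W)} := by
    apply le_antisymm
    · intro f hf
      rw [Representation.mem_invariants] at hf
      have hcomm : ∀ (g : K) (v : W),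
          f (MonoidAlgebra.single g (1:ℂ) • v) = MonoidAlgebra.single g (1:ℂ) • f v := by
        intro g v
        have h1 := hf g
        rw [hL, Representation.linHom_apply] at h1
        have h2 : f (ρ g v) = (ρ g ∘ₗ f ∘ₗ ρ g⁻¹) (ρ g v) := by rw [h1]
        have h3 : ρ g⁻¹ (ρ g v) = v := by
          rw [← Module.End.mul_apply, ← _root_.map_mul, inv_mul_cancel, _root_.map_one,
            Module.End.one_apply]
        simp only [LinearMap.coe_comp, Function.comp_apply, h3] at h2
        rw [← modRep_apply g v, ← modRep_apply g (f v), ← hρ]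
        exact h2
      obtain ⟨c, hc⟩ := schur_scalar W hsimp f hcomm
      rw [hc]
      exact Submodule.smul_mem _ c (Submodule.mem_span_singleton_self _)
    · rw [Submodule.span_le, Set.singleton_subset_iff]
      rw [SetLike.mem_coe, Representation.mem_invariants]
      intro g
      rw [hL, Representation.linHom_apply]
      ext v
      simp only [LinearMap.coe_comp, Function.comp_apply, LinearMap.id_apply]
      rw [← Module.End.mul_apply, ← _root_.map_mul, mul_inv_cancel, _root_.map_one,
        Module.End.one_apply]
  have hid_ne : (LinearMap.id : W →ₗ[ℂ] W) ≠ 0 := by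
    intro h
    obtain ⟨v, hv⟩ := exists_ne (0 : W)
    apply hv
    have := congrFun (congrArg DFunLike.coe h) v
    simpa using this
  have hrank : finrank ℂ L.invariants = 1 := by
    rw [hinv_eq]
    exact finrank_span_singleton hid_ne
  -- average of linHom character = finrank invariants
  have havg : ⅟(Fintype.card K : ℂ) • ∑ g : K, trace ℂ _ (L g) = 1 := by
    have h1 := (Representation.isProj_averageMap L).trace
    have h2 : trace ℂ _ (L.averageMap) = ⅟(Fintype.card K : ℂ) • ∑ g : K, trace ℂ _ (L g) := by
      rw [Representation.averageMap, GroupAlgebra.average, _root_.map_smul, _root_.map_sum,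
        _root_.map_smul]
      congr 1
      rw [map_sum]
      refine Finset.sum_congr rfl fun g _ => ?_
      rw [MonoidAlgebra.of_apply, Representation.asAlgebraHom_single_one]
    rw [← h2, h1, hrank, Nat.cast_one]
  -- trace of linHom g = (trace ρ g⁻¹) * (trace ρ g)
  have hlin : ∀ g : K, trace ℂ _ (L g) = trace ℂ W (ρ g⁻¹) * trace ℂ W (ρ g) := by
    intro g
    have he : L g = (dualTensorHomEquiv ℂ W W).conj (TensorProduct.map (ρ.dual g) (ρ g)) := by
      have hcomm := Representation.dualTensorHom_comm ρ ρ g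
      refine LinearMap.ext fun f => ?_
      rw [LinearEquiv.conj_apply]
      simp only [LinearMap.coe_comp, Function.comp_apply, LinearEquiv.coe_coe]
      have h5 := congrFun (congrArg DFunLike.coe hcomm) ((dualTensorHomEquiv ℂ W W).symm f)
      simp only [LinearMap.coe_comp, Function.comp_apply] at h5
      have h6 : ∀ y : Module.Dual ℂ W ⊗[ℂ] W,
          (dualTensorHom ℂ W W) y = (dualTensorHomEquiv ℂ W W) y := by
        intro y
        simp [dualTensorHomEquiv, dualTensorHomEquivOfBasis_apply]
      rw [h6, h6, LinearEquiv.apply_symm_apply] at h5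
      exact h5.symm
    rw [he, LinearMap.trace_conj', trace_tensorProduct']
    congr 1
    rw [Representation.dual_apply]
    exact trace_transpose' (ρ g⁻¹)
  -- assemble
  have hstar : ∀ g : K, star (mchar K W g) = trace ℂ W (ρ g⁻¹) := fun g =>
    (rep_trace_inv_eq_star ρ g).symm
  have : ∑ g : K, mchar K W g * star (mchar K W g)
      = ∑ g : K, trace ℂ _ (L g) := by
    refine Finset.sum_congr rfl fun g _ => ?_
    rw [hstar g, hlin g, mul_comm]
    rfl
  rw [invOf_eq_inv] at havg
  show (Fintype.card K : ℂ)⁻¹ * ∑ g : K, mchar K W g * star (mchar K W g) = 1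
  rw [this, ← havg, smul_eq_mul]
end Simple

lemma mchar_regular {K : Type} [Group K] [Fintype K] (g : K) :
    mchar K (MonoidAlgebra ℂ K) g = if g = 1 then (Fintype.card K : ℂ) else 0 := by
  classical
  let b : Basis K ℂ (MonoidAlgebra ℂ K) := MonoidAlgebra.basis K ℂ
  rw [mchar, trace_eq_matrix_trace ℂ b, Matrix.trace]
  have hdiag : ∀ h : K, (toMatrix b b (modRep K (MonoidAlgebra ℂ K) g)).diag h
      = if g = 1 then 1 else 0 := by
    intro h
    rw [Matrix.diag_apply, LinearMap.toMatrix_apply]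
    have hb : b h = MonoidAlgebra.single h (1:ℂ) := rfl
    rw [hb, modRep_apply, smul_eq_mul, MonoidAlgebra.single_mul_single, mul_one]
    have hrepr : b.repr (MonoidAlgebra.single (g*h) (1:ℂ)) = Finsupp.single (g*h) (1:ℂ) := rfl
    rw [hrepr]
    show (Finsupp.single (g*h) (1:ℂ)) h = _
    rw [Finsupp.single_apply]
    by_cases hg : g = 1
    · subst hg; rw [if_pos (one_mul h), if_pos rfl]
    · rw [if_neg, if_neg hg]
      intro hc
      exact hg (mul_eq_right.mp hc)
  rw [Finset.sum_congr rfl (fun h _ => hdiag h)]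
  by_cases hg : g = 1
  · subst hg
    simp [Finset.card_univ]
  · simp [hg]

/-- key step of Proposition 2.10 in the paper.  Suppose
`ψ = ψ₀^H ∈ Irr(H)` is irreducibly induced from `H₀ ≤ H`, `M ⊴ H` with
`H = H₀M`, and `x ∈ C_H(M)`.  Set `J = ⟨M, x⟩` and `J₀ = J ∩ H₀`.  If every
irreducible character of `J` lying over a fixed `φ ∈ Irr(M)` is induced from
`J₀`, then `x ∈ J₀`. -/
theorem element_in_J0 {G : Type} [Group G] [Fintype G]
    (N H0 H M : Subgroup G) (hN : N.Normal) (hH0H : H0 ≤ H)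
    (ψ0 : ↥H0 → ℂ) (hψ0 : IsIrrChar ↥H0 ψ0)
    (hψ : IsIrrChar ↥H (IndRel H H0 ψ0))
    (hM : M.Normal) (hMH : M ≤ H) (hH : H0 ⊔ M = H)
    (x : G) (hx : x ∈ Subgroup.centralizer (M : Set G) ⊓ H)
    (J J0 : Subgroup G) (hJ : J = M ⊔ Subgroup.zpowers x) (hJ0 : J0 = J ⊓ H0)
    (hMJ : M ≤ J)
    (φ : ↥M → ℂ) (hφ : IsIrrChar ↥M φ)
    (hind : ∀ χ : ↥J → ℂ, IsIrrChar ↥J χ → cfInner ↥M (Res hMJ χ) φ ≠ 0 →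
      ∃ χ0 : ↥J0 → ℂ, IsIrrChar ↥J0 χ0 ∧ χ = IndRel J J0 χ0) :
    x ∈ J0 := by
  classical
  by_contra hnot
  have hxJ : x ∈ J := by
    rw [hJ]; exact Subgroup.mem_sup_right (Subgroup.mem_zpowers x)
  -- x commutes with everything in J
  have hJcent : J ≤ Subgroup.centralizer {x} := by
    rw [hJ, sup_le_iff]
    constructor
    · intro m hm
      rw [Subgroup.mem_centralizer_iff]
      intro y hy
      rw [Set.mem_singleton_iff] at hy
      rw [hy]
      exact ((Subgroup.mem_centralizer_iff.mp hx.1) m hm).symm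
    · intro y hy
      rw [Subgroup.mem_zpowers_iff] at hy
      obtain ⟨k, rfl⟩ := hy
      rw [Subgroup.mem_centralizer_iff]
      intro z hz
      rw [Set.mem_singleton_iff] at hz
      rw [hz]
      exact ((Commute.refl x).zpow_right k).eq
  set ξ : ↥J := ⟨x, hxJ⟩ with hξ
  have hucomm : ∀ u : ↥J, (u : G) * (ξ : G) * (u : G)⁻¹ = x := by
    intro u
    have hu := Subgroup.mem_centralizer_iff.mp (hJcent u.2) x (Set.mem_singleton x)
    -- hu : x * ↑u = ↑u * x
    have : (u : G) * (ξ : G) = x * (u : G) := by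
      show (u : G) * x = x * (u : G)
      exact hu.symm
    rw [this, mul_assoc, mul_inv_cancel, mul_one]
  have hcentral : ∀ u : ↥J, u * ξ = ξ * u := by
    intro u
    apply Subtype.ext
    show (u : G) * x = x * (u : G)
    exact (Subgroup.mem_centralizer_iff.mp (hJcent u.2) x (Set.mem_singleton x)).symm
  -- φ(1) ≠ 0
  have hφ1 : φ 1 ≠ 0 := by
    obtain ⟨n, σ, hσ⟩ := hφ.1
    intro h0
    have h1 : φ 1 = (n : ℂ) := by
      rw [hσ 1, _root_.map_one]
      rw [LinearMap.trace_one]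
      norm_num
    have hn : n = 0 := by
      rw [h1] at h0
      exact_mod_cast h0
    subst hn
    have hzero : ∀ g : ↥M, φ g = 0 := by
      intro g
      rw [hσ g]
      haveI : Subsingleton (Fin 0 → ℂ) := by infer_instance
      rw [Subsingleton.elim (σ g) 0, map_zero]
    have := hφ.2
    rw [cfInner] at this
    simp only [hzero, zero_mul, Finset.sum_const_zero, mul_zero] at this
    exact zero_ne_one this
  -- the linear functional F
  set F : (↥J → ℂ) → ℂ := fun χ => cfInner ↥M (Res hMJ χ) φ with hF
  have hFadd : ∀ a b : ↥J → ℂ, F (fun g => a g + b g) = F a + F b := by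
    intro a b
    simp only [hF, cfInner, Res]
    rw [← mul_add, ← Finset.sum_add_distrib]
    congr 1
    refine Finset.sum_congr rfl fun m _ => ?_
    ring
  have hF0 : F (fun _ => 0) = 0 := by
    simp [hF, cfInner, Res]
  -- all simple modules have vanishing F
  have hsimple : ∀ (W : Type) [AddCommGroup W] [Module ℂ W] [Module (MonoidAlgebra ℂ ↥J) W]
      [IsScalarTower ℂ (MonoidAlgebra ℂ ↥J) W] [FiniteDimensional ℂ W],
      IsSimpleModule (MonoidAlgebra ℂ ↥J) W → F (mchar ↥J W) = 0 := by
    intro W _ _ _ _ _ hsimp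
    by_contra hFW
    have hirr : IsIrrChar ↥J (mchar ↥J W) := ⟨mchar_isChar W, mchar_selfInner W hsimp⟩
    obtain ⟨χ0, _hχ0, heq⟩ := hind (mchar ↥J W) hirr hFW
    have hcond : ∀ u : ↥J, ¬((u : G) * (ξ : G) * (u : G)⁻¹ ∈ J0) := by
      intro u
      rw [hucomm u]
      exact hnot
    have hzero : mchar ↥J W ξ = 0 := by
      rw [congrFun heq ξ, IndRel]
      rw [Finset.sum_eq_zero (fun u _ => dif_neg (hcond u)), mul_zero]
    have hnz : mchar ↥J W ξ ≠ 0 :=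
      central_mchar_ne_zero W hsimp ξ hcentral
    exact hnz hzero
  -- apply the decomposition to the regular module
  haveI : FiniteDimensional ℂ (MonoidAlgebra ℂ ↥J) :=
    Module.Finite.of_basis (MonoidAlgebra.basis ↥J ℂ : Basis ↥J ℂ (MonoidAlgebra ℂ ↥J))
  have hreg := aux_decomp F hFadd hF0 hsimple (finrank ℂ (MonoidAlgebra ℂ ↥J))
    (MonoidAlgebra ℂ ↥J) le_rfl
  -- but F of the regular character is nonzero
  have hterm : ∀ m : ↥M, mchar ↥J (MonoidAlgebra ℂ ↥J) ⟨m.1, hMJ m.2⟩ * star (φ m)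
      = if m = 1 then (Fintype.card ↥J : ℂ) * star (φ 1) else 0 := by
    intro m
    rw [mchar_regular]
    by_cases hm : m = 1
    · subst hm
      rw [if_pos rfl, if_pos]
      rfl
    · rw [if_neg, if_neg hm, zero_mul]
      intro hc
      have hval : (m : G) = 1 := congrArg Subtype.val hc
      exact hm (Subtype.ext hval)
  have hcompute : F (mchar ↥J (MonoidAlgebra ℂ ↥J))
      = (Fintype.card ↥M : ℂ)⁻¹ * ((Fintype.card ↥J : ℂ) * star (φ 1)) := by
    simp only [hF, cfInner, Res]
    congr 1
    rw [Finset.sum_congr rfl (fun m _ => hterm m)]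
    rw [Finset.sum_ite_eq' Finset.univ (1 : ↥M) (fun _ => (Fintype.card ↥J : ℂ) * star (φ 1))]
    simp
  rw [hcompute] at hreg
  have h1 : ((Fintype.card ↥M : ℂ))⁻¹ ≠ 0 :=
    inv_ne_zero (Nat.cast_ne_zero.mpr Fintype.card_ne_zero)
  have h2 : (Fintype.card ↥J : ℂ) ≠ 0 := Nat.cast_ne_zero.mpr Fintype.card_ne_zero
  have h3 : star (φ 1) ≠ 0 := star_ne_zero.mpr hφ1
  exact (mul_ne_zero h1 (mul_ne_zero h2 h3)) hreg

end
end Machinery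
end CTC
end
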